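/- arXiv:0710.1774 — 3 statements merged into one kernel-verified Lean document; each statement's English description precedes it below -/
import Mathlib

section
/- Let f : ℝ × ℝ → ℝ be a nonlinearity with D₂f(t,x) > 0 for all (t,x). Define, in the extended real numbers, f₊(t) = sup_x f(t,x) = lim_{x→+∞} f(t,x) and f₋(t) = inf_x f(t,x) = lim_{x→−∞} f(t,x), and the extended-real integrals I₊ = ∫₀¹ f₊(t) dt ∈ (−∞, +∞] and I₋ = ∫₀¹ f₋(t) dt ∈ [−∞, +∞). Then for every continuous 1-periodic v : ℝ → ℝ, the equation u' + f(t,u) = v admits a periodic solution if and only if I₋ < ∫₀¹ v(t) dt < I₊, and in that case the periodic solution is unique. -/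
open Set Filter Topology intervalIntegral


/-- A function is 1-periodic if `u (t+1) = u t` for all `t`. -/
def Periodic1 (u : ℝ → ℝ) : Prop := ∀ t, u (t + 1) = u t

/-- A nonlinearity is a smooth function `f : ℝ × ℝ → ℝ` which is 1-periodic
in the first variable. -/
def Nonlinearity (f : ℝ → ℝ → ℝ) : Prop :=
  ContDiff ℝ (⊤ : ℕ∞) (Function.uncurry f) ∧ ∀ t x, f (t + 1) x = f t x

/-- A periodic solution of `u' + f(t,u) = v`. -/
def IsPeriodicSol (f : ℝ → ℝ → ℝ) (v u : ℝ → ℝ) : Prop :=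
  ContDiff ℝ 1 u ∧ Periodic1 u ∧ ∀ t, deriv u t + f t (u t) = v t

lemma aux_right_deriv_nonneg {g : ℝ → ℝ} {d τ b : ℝ} (hτb : τ < b)
    (hg : HasDerivWithinAt g d (Set.Icc (0:ℝ) 1) τ) (hsub : Set.Ioc τ b ⊆ Set.Icc 0 1)
    (hge : ∀ s ∈ Set.Ioc τ b, g τ ≤ g s) : 0 ≤ d := by
  rw [hasDerivWithinAt_iff_tendsto_slope] at hg
  have hle : 𝓝[Set.Ioc τ b] τ ≤ 𝓝[Set.Icc (0:ℝ) 1 \ {τ}] τ := by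
    apply nhdsWithin_mono
    intro s hs
    exact ⟨hsub hs, by simp [ne_of_gt hs.1]⟩
  have h2 : Tendsto (slope g τ) (𝓝[Set.Ioc τ b] τ) (𝓝 d) := hg.mono_left hle
  have hne : (𝓝[Set.Ioc τ b] τ).NeBot := by
    rw [nhdsWithin_Ioc_eq_nhdsGT hτb]; infer_instance
  refine ge_of_tendsto h2 ?_
  filter_upwards [self_mem_nhdsWithin] with s hs
  rw [slope_def_field]
  exact div_nonneg (sub_nonneg.2 (hge s hs)) (sub_nonneg.2 hs.1.le)

/-- No-upcrossing lemma. -/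
lemma aux_no_upcross {W B dW dB : ℝ → ℝ}
    (hW : ∀ t ∈ Set.Icc (0:ℝ) 1, HasDerivWithinAt W (dW t) (Set.Icc 0 1) t)
    (hB : ∀ t ∈ Set.Icc (0:ℝ) 1, HasDerivWithinAt B (dB t) (Set.Icc 0 1) t)
    (h0 : W 0 ≤ B 0)
    (key : ∀ t ∈ Set.Ico (0:ℝ) 1, W t = B t → dW t < dB t) :
    ∀ t ∈ Set.Icc (0:ℝ) 1, W t ≤ B t := by
  intro t₁ ht₁
  by_contra hc
  push_neg at hc
  set h : ℝ → ℝ := fun s => W s - B s with hh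
  have hcont : ContinuousOn h (Set.Icc 0 1) := fun s hs =>
    ((hW s hs).continuousWithinAt.sub (hB s hs).continuousWithinAt)
  have ht₁0 : (0:ℝ) < t₁ := by
    rcases lt_or_eq_of_le ht₁.1 with h' | h'
    · exact h'
    · exfalso; rw [← h'] at hc; exact absurd h0 (not_le.2 hc)
  set S : Set ℝ := Set.Icc 0 t₁ ∩ h ⁻¹' (Set.Iic 0) with hS
  have hIccsub : Set.Icc (0:ℝ) t₁ ⊆ Set.Icc 0 1 := Icc_subset_Icc le_rfl ht₁.2
  have hSclosed : IsClosed S :=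
    (hcont.mono hIccsub).preimage_isClosed_of_isClosed isClosed_Icc isClosed_Iic
  have hScomp : IsCompact S := isCompact_Icc.of_isClosed_subset hSclosed inter_subset_left
  have h0S : (0:ℝ) ∈ S := ⟨⟨le_rfl, ht₁0.le⟩, by simp [hh]; linarith⟩
  have hSne : S.Nonempty := ⟨0, h0S⟩
  set τ := sSup S with hτ
  have hτS : τ ∈ S := hScomp.sSup_mem hSne
  have hτt₁ : τ ≤ t₁ := hτS.1.2
  have hτ1 : τ ∈ Set.Icc (0:ℝ) 1 := ⟨hτS.1.1, le_trans hτt₁ ht₁.2⟩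
  have hτne : τ ≠ t₁ := by
    intro h'
    have : h t₁ ≤ 0 := h' ▸ hτS.2
    simp only [hh] at this; linarith
  have hτlt : τ < t₁ := lt_of_le_of_ne hτt₁ hτne
  -- on (τ, t₁], h > 0
  have hpos : ∀ s ∈ Set.Ioc τ t₁, 0 < h s := by
    intro s hs
    by_contra hns
    push_neg at hns
    have : s ∈ S := ⟨⟨le_trans hτS.1.1 hs.1.le, hs.2⟩, hns⟩
    exact absurd (le_csSup hScomp.bddAbove this) (not_le.2 hs.1)
  -- h τ = 0
  have hτ0 : h τ = 0 := by
    refine le_antisymm hτS.2 ?_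
    have hcw : ContinuousWithinAt h (Set.Ioc τ t₁) τ :=
      (hcont τ hτ1).mono (fun s hs => ⟨le_trans hτ1.1 hs.1.le, le_trans hs.2 ht₁.2⟩)
    have hne : (𝓝[Set.Ioc τ t₁] τ).NeBot := by
      rw [nhdsWithin_Ioc_eq_nhdsGT hτlt]; infer_instance
    refine ge_of_tendsto hcw ?_
    filter_upwards [self_mem_nhdsWithin] with s hs
    exact (hpos s hs).le
  have hWB : W τ = B τ := by have := hτ0; simp only [hh] at this; linarith
  have hkey : dW τ < dB τ := key τ ⟨hτ1.1, lt_of_lt_of_le hτlt ht₁.2⟩ hWB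
  have hd : HasDerivWithinAt h (dW τ - dB τ) (Set.Icc 0 1) τ := (hW τ hτ1).sub (hB τ hτ1)
  have : 0 ≤ dW τ - dB τ := by
    refine aux_right_deriv_nonneg hτlt hd (fun s hs => ⟨le_trans hτ1.1 hs.1.le, le_trans hs.2 ht₁.2⟩) ?_
    intro s hs
    rw [hτ0]
    exact (hpos s hs).le
  linarith

section basic
variable {f : ℝ → ℝ → ℝ}

lemma aux_cont (hf : Nonlinearity f) : Continuous (Function.uncurry f) :=
  hf.1.continuous

lemma aux_cont_t (hf : Nonlinearity f) {u : ℝ → ℝ} (hu : Continuous u) :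
    Continuous (fun t => f t (u t)) :=
  (aux_cont hf).comp (continuous_id.prodMk hu)

lemma aux_mono (hD2 : ∀ t x, 0 < deriv (f t) x) (t : ℝ) : StrictMono (f t) :=
  strictMono_of_deriv_pos (hD2 t)

lemma aux_intg (hf : Nonlinearity f) {u : ℝ → ℝ} (hu : Continuous u) (a b : ℝ) :
    IntervalIntegrable (fun t => f t (u t)) MeasureTheory.volume a b :=
  (aux_cont_t hf hu).intervalIntegrable a b

lemma aux_int_strictMono (hf : Nonlinearity f) (hD2 : ∀ t x, 0 < deriv (f t) x)
    {x y : ℝ} (hxy : x < y) :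
    (∫ t in (0:ℝ)..1, f t x) < ∫ t in (0:ℝ)..1, f t y := by
  have h1 : IntervalIntegrable (fun t => f t x) MeasureTheory.volume 0 1 :=
    aux_intg hf continuous_const 0 1
  have h2 : IntervalIntegrable (fun t => f t y) MeasureTheory.volume 0 1 :=
    aux_intg hf continuous_const 0 1
  have h3 : 0 < ∫ t in (0:ℝ)..1, (f t y - f t x) := by
    refine intervalIntegral_pos_of_pos_on (h2.sub h1) ?_ one_pos
    intro s _
    exact sub_pos.2 (aux_mono hD2 s hxy)
  rw [integral_sub h2 h1] at h3
  linarith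

lemma aux_int_mono (hf : Nonlinearity f) (hD2 : ∀ t x, 0 < deriv (f t) x)
    {x y : ℝ} (hxy : x ≤ y) :
    (∫ t in (0:ℝ)..1, f t x) ≤ ∫ t in (0:ℝ)..1, f t y := by
  rcases eq_or_lt_of_le hxy with h | h
  · rw [h]
  · exact (aux_int_strictMono hf hD2 h).le

lemma aux_sol_integral (hf : Nonlinearity f) {v u : ℝ → ℝ} (hv : Continuous v)
    (hu : IsPeriodicSol f v u) :
    (∫ t in (0:ℝ)..1, v t) = ∫ t in (0:ℝ)..1, f t (u t) := by
  obtain ⟨huc, hup, hueq⟩ := hu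
  have hucont : Continuous u := huc.continuous
  have hder : ∀ t, deriv u t = v t - f t (u t) := fun t => by linarith [hueq t]
  have hdc : Continuous (deriv u) := by
    have : deriv u = fun t => v t - f t (u t) := funext hder
    rw [this]; exact hv.sub (aux_cont_t hf hucont)
  have hint : (∫ t in (0:ℝ)..1, deriv u t) = u 1 - u 0 :=
    integral_deriv_eq_sub (fun s _ => huc.differentiable one_ne_zero s) (hdc.intervalIntegrable 0 1)
  have hper : u 1 = u 0 := by simpa using hup 0
  have h2 : (∫ t in (0:ℝ)..1, deriv u t) = 0 := by rw [hint, hper]; ring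
  have h3 : (∫ t in (0:ℝ)..1, deriv u t) = ∫ t in (0:ℝ)..1, (v t - f t (u t)) := by
    congr 1; funext t; exact hder t
  rw [h3, integral_sub (hv.intervalIntegrable 0 1) (aux_intg hf hucont 0 1)] at h2
  linarith

lemma aux_forward_bounds (hf : Nonlinearity f) (hD2 : ∀ t x, 0 < deriv (f t) x)
    {u : ℝ → ℝ} (hu : Continuous u) :
    (∃ x : ℝ, (∫ t in (0:ℝ)..1, f t (u t)) < ∫ t in (0:ℝ)..1, f t x) ∧
    (∃ x : ℝ, (∫ t in (0:ℝ)..1, f t x) < ∫ t in (0:ℝ)..1, f t (u t)) := by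
  obtain ⟨tM, htM, hM⟩ := isCompact_Icc.exists_isMaxOn (s := Set.Icc (0:ℝ) 1)
    (Set.nonempty_Icc.2 zero_le_one) (hu.continuousOn)
  obtain ⟨tm, htm, hm⟩ := isCompact_Icc.exists_isMinOn (s := Set.Icc (0:ℝ) 1)
    (Set.nonempty_Icc.2 zero_le_one) (hu.continuousOn)
  constructor
  · refine ⟨u tM + 1, lt_of_le_of_lt ?_ (aux_int_strictMono hf hD2 (lt_add_one (u tM)))⟩
    apply integral_mono_on zero_le_one (aux_intg hf hu 0 1) (aux_intg hf continuous_const 0 1)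
    intro s hs
    exact (aux_mono hD2 s).monotone (hM hs)
  · refine ⟨u tm - 1, lt_of_lt_of_le (aux_int_strictMono hf hD2 (by linarith : u tm - 1 < u tm)) ?_⟩
    apply integral_mono_on zero_le_one (aux_intg hf continuous_const 0 1) (aux_intg hf hu 0 1)
    intro s hs
    exact (aux_mono hD2 s).monotone (hm hs)

end basic

lemma aux_mono' {f : ℝ → ℝ → ℝ} (hD2 : ∀ t x, 0 < deriv (f t) x) (t : ℝ) : StrictMono (f t) :=
  strictMono_of_deriv_pos (hD2 t)

lemma aux_uniq_le {f : ℝ → ℝ → ℝ} (hD2 : ∀ t x, 0 < deriv (f t) x)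
    {v u₁ u₂ : ℝ → ℝ} (h1 : IsPeriodicSol f v u₁) (h2 : IsPeriodicSol f v u₂) :
    ∀ t, u₁ t ≤ u₂ t := by
  obtain ⟨hc1, hp1, he1⟩ := h1
  obtain ⟨hc2, hp2, he2⟩ := h2
  set g : ℝ → ℝ := fun t => u₁ t - u₂ t with hg
  have hgper : Function.Periodic g 1 := fun t => by simp [hg, hp1 t, hp2 t]
  have hgc : Continuous g := (hc1.continuous).sub (hc2.continuous)
  obtain ⟨ts, hts, hmax⟩ := isCompact_Icc.exists_isMaxOn (s := Set.Icc (0:ℝ) 1)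
    (Set.nonempty_Icc.2 zero_le_one) hgc.continuousOn
  have hglobal : ∀ s, g s ≤ g ts := by
    intro s
    have h1' : g s = g (Int.fract s) := by
      have := hgper.sub_int_mul_eq (x := s) ⌊s⌋
      simp only [mul_one] at this
      rw [Int.fract]; exact this.symm
    rw [h1']
    exact hmax ⟨Int.fract_nonneg s, (Int.fract_lt_one s).le⟩
  have hlm : IsLocalMax g ts := by
    filter_upwards [univ_mem] with s _
    exact hglobal s
  have hd0 : deriv g ts = 0 := hlm.deriv_eq_zero
  have hd : deriv g ts = deriv u₁ ts - deriv u₂ ts := by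
    exact deriv_fun_sub (hc1.differentiable one_ne_zero ts) (hc2.differentiable one_ne_zero ts)
  by_contra hcon
  push_neg at hcon
  obtain ⟨t₀, ht₀⟩ := hcon
  have hpos : 0 < g ts := lt_of_lt_of_le (by simp [hg]; linarith) (hglobal t₀)
  have : u₂ ts < u₁ ts := by simp only [hg] at hpos; linarith
  have hflt : f ts (u₂ ts) < f ts (u₁ ts) := aux_mono' hD2 ts this
  have : deriv u₁ ts < deriv u₂ ts := by linarith [he1 ts, he2 ts]
  rw [hd] at hd0; linarith

lemma aux_uniq {f : ℝ → ℝ → ℝ} (hD2 : ∀ t x, 0 < deriv (f t) x)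
    {v u₁ u₂ : ℝ → ℝ} (h1 : IsPeriodicSol f v u₁) (h2 : IsPeriodicSol f v u₂) :
    u₁ = u₂ :=
  funext fun t => le_antisymm (aux_uniq_le hD2 h1 h2 t) (aux_uniq_le hD2 h2 h1 t)

/-- Construction of sub/super solution profiles based at level `r`. -/
lemma aux_barrier {f : ℝ → ℝ → ℝ} (hf : Nonlinearity f) {v : ℝ → ℝ} (hv : Continuous v) (r : ℝ) :
    ∃ B A : ℝ → ℝ,
      (∀ t, HasDerivAt B (v t - f t r + ((∫ s in (0:ℝ)..1, f s r) - ∫ s in (0:ℝ)..1, v s)) t) ∧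
      (∀ t, HasDerivAt A (v t - f t r + ((∫ s in (0:ℝ)..1, f s r) - ∫ s in (0:ℝ)..1, v s)) t) ∧
      B 1 = B 0 ∧ A 1 = A 0 ∧ (∀ t ∈ Set.Icc (0:ℝ) 1, r ≤ B t) ∧
      (∀ t ∈ Set.Icc (0:ℝ) 1, A t ≤ r) := by
  have hfr : Continuous (fun s => f s r) :=
    hf.1.continuous.comp (continuous_id.prodMk continuous_const)
  set c : ℝ := (∫ s in (0:ℝ)..1, f s r) - ∫ s in (0:ℝ)..1, v s with hc
  set gB : ℝ → ℝ := fun s => v s - f s r + c with hgB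
  have hgBc : Continuous gB := (hv.sub hfr).add continuous_const
  set W : ℝ → ℝ := fun t => ∫ s in (0:ℝ)..t, gB s with hW
  have hWd : ∀ t, HasDerivAt W (gB t) t := fun t =>
    (hgBc.integral_hasStrictDerivAt 0 t).hasDerivAt
  have hWc : Continuous W := continuous_iff_continuousAt.2 fun t => (hWd t).continuousAt
  have hW0 : W 0 = 0 := by simp [hW]
  have hW1 : W 1 = 0 := by
    have h1 : W 1 = (∫ s in (0:ℝ)..1, (v s - f s r)) + ∫ s in (0:ℝ)..1, c := by
      rw [hW]
      exact integral_add ((hv.sub hfr).intervalIntegrable 0 1)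
        (continuous_const.intervalIntegrable 0 1)
    rw [h1, integral_sub (hv.intervalIntegrable 0 1) (hfr.intervalIntegrable 0 1),
      integral_const]
    simp only [smul_eq_mul, hc]
    ring
  obtain ⟨tK, htK, hK⟩ := isCompact_Icc.exists_isMaxOn (s := Set.Icc (0:ℝ) 1)
    (Set.nonempty_Icc.2 zero_le_one) ((continuous_abs.comp hWc).continuousOn)
  set K : ℝ := |W tK| with hKdef
  refine ⟨fun t => r + K + W t, fun t => r - K + W t, ?_, ?_, ?_, ?_, ?_, ?_⟩
  · intro t; exact (hWd t).const_add _
  · intro t; exact (hWd t).const_add _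
  · simp [hW1, hW0]
  · simp [hW1, hW0]
  · intro t ht
    have h1 : |W t| ≤ K := hK ht
    have := abs_le.1 h1
    simp only []
    linarith [this.1]
  · intro t ht
    have h1 : |W t| ≤ K := hK ht
    have := abs_le.1 h1
    simp only []
    linarith [this.2]

/-- Uniform Lipschitz constant for `f` on `[0,1] × [m,M]`. -/
lemma aux_lip {f : ℝ → ℝ → ℝ} (hf : Nonlinearity f) (m M : ℝ) :
    ∃ K : NNReal, ∀ t ∈ Set.Icc (0:ℝ) 1, ∀ x ∈ Set.Icc m M, ∀ y ∈ Set.Icc m M,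
      |f t x - f t y| ≤ K * |x - y| := by
  by_cases hmM : m ≤ M
  · set F := Function.uncurry f with hF
    set S : Set (ℝ × ℝ) := Set.Icc (0:ℝ) 1 ×ˢ Set.Icc m M with hS
    have hSc : IsCompact S := isCompact_Icc.prod isCompact_Icc
    have hSne : S.Nonempty := ⟨(0, m), ⟨le_rfl, zero_le_one⟩, le_rfl, hmM⟩
    have hFd : Differentiable ℝ F := hf.1.differentiable (by simp)
    have hfc : Continuous fun z => ‖fderiv ℝ F z‖ :=
      (hf.1.continuous_fderiv (by simp)).norm
    obtain ⟨z₀, hz₀S, hz₀⟩ := hSc.exists_isMaxOn hSne hfc.continuousOn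
    set K : NNReal := ‖fderiv ℝ F z₀‖₊ with hKdef
    have hconv : Convex ℝ S := (convex_Icc _ _).prod (convex_Icc _ _)
    have hlip : LipschitzOnWith K F S := by
      refine Convex.lipschitzOnWith_of_nnnorm_hasFDerivWithin_le
        (f' := fun z => fderiv ℝ F z) (fun z hz => (hFd z).hasFDerivAt.hasFDerivWithinAt)
        (fun z hz => ?_) hconv
      rw [← NNReal.coe_le_coe]
      exact hz₀ hz
    refine ⟨K, fun t ht x hx y hy => ?_⟩
    have h1 := hlip.dist_le_mul (t, x) ⟨ht, hx⟩ (t, y) ⟨ht, hy⟩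
    rw [Prod.dist_eq] at h1
    simp only [dist_self, Real.dist_eq] at h1
    calc |f t x - f t y| = |F (t, x) - F (t, y)| := rfl
      _ ≤ K * max 0 |x - y| := by rw [← Real.dist_eq, ← Real.dist_eq] at h1 ⊢; exact h1
      _ = K * |x - y| := by rw [max_eq_right (abs_nonneg _)]
  · exact ⟨1, fun t ht x hx y hy => absurd (le_trans hx.1 hx.2) hmM⟩

lemma aux_exists {f : ℝ → ℝ → ℝ} (hf : Nonlinearity f) (hD2 : ∀ t x, 0 < deriv (f t) x)
    {v : ℝ → ℝ} (hv : Continuous v) (hvper : Periodic1 v) {p q : ℝ}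
    (hq : (∫ t in (0:ℝ)..1, f t q) < ∫ t in (0:ℝ)..1, v t)
    (hp : (∫ t in (0:ℝ)..1, v t) < ∫ t in (0:ℝ)..1, f t p) :
    ∃ u : ℝ → ℝ, IsPeriodicSol f v u := by
  have hqp : q < p := by
    by_contra hcon
    push_neg at hcon
    exact absurd (aux_int_mono hf hD2 hcon) (not_le.2 (lt_trans hq hp))
  -- super/sub solutions
  obtain ⟨β, -, hβd, -, hβ10, -, hβge, -⟩ := aux_barrier hf hv p
  obtain ⟨-, α, -, hαd, -, hα10, -, hαle⟩ := aux_barrier hf hv q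
  set V : ℝ := ∫ t in (0:ℝ)..1, v t with hV
  set Fp : ℝ := ∫ t in (0:ℝ)..1, f t p with hFp
  set Fq : ℝ := ∫ t in (0:ℝ)..1, f t q with hFq
  have hβcont : Continuous β := continuous_iff_continuousAt.2 fun t => (hβd t).continuousAt
  have hαcont : Continuous α := continuous_iff_continuousAt.2 fun t => (hαd t).continuousAt
  obtain ⟨tM, htM, hM⟩ := isCompact_Icc.exists_isMaxOn (s := Set.Icc (0:ℝ) 1)
    (Set.nonempty_Icc.2 zero_le_one) hβcont.continuousOn
  obtain ⟨tm, htm, hm⟩ := isCompact_Icc.exists_isMinOn (s := Set.Icc (0:ℝ) 1)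
    (Set.nonempty_Icc.2 zero_le_one) hαcont.continuousOn
  set M : ℝ := β tM with hMdef
  set m : ℝ := α tm with hmdef
  have h01 : (0:ℝ) ∈ Set.Icc (0:ℝ) 1 := ⟨le_rfl, zero_le_one⟩
  have h11 : (1:ℝ) ∈ Set.Icc (0:ℝ) 1 := ⟨zero_le_one, le_rfl⟩
  have hmq : m ≤ q := le_trans (hm h01) (hαle 0 h01)
  have hpM : p ≤ M := le_trans (hβge 0 h01) (hM h01)
  have hmM : m ≤ M := by linarith
  -- clamping
  set cl : ℝ → ℝ := fun x => max m (min M x) with hcl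
  set pj : ℝ → ℝ := fun t => max 0 (min 1 t) with hpj
  have hpj_mem : ∀ t, pj t ∈ Set.Icc (0:ℝ) 1 :=
    fun t => ⟨le_max_left _ _, max_le zero_le_one (min_le_left _ _)⟩
  have hpj_id : ∀ t ∈ Set.Icc (0:ℝ) 1, pj t = t := by
    intro t ht; rw [hpj]; simp only [min_eq_right ht.2, max_eq_right ht.1]
  have hcl_mem : ∀ x, cl x ∈ Set.Icc m M :=
    fun x => ⟨le_max_left _ _, max_le hmM (min_le_left _ _)⟩
  have hcl_id : ∀ x ∈ Set.Icc m M, cl x = x := by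
    intro x hx; rw [hcl]; simp only [min_eq_right hx.2, max_eq_right hx.1]
  have hcl_lip : ∀ x y, |cl x - cl y| ≤ |x - y| := by
    intro x y
    calc |cl x - cl y| ≤ max |m - m| |min M x - min M y| := abs_max_sub_max_le_max _ _ _ _
      _ ≤ max |m - m| (max |M - M| |x - y|) :=
          max_le_max le_rfl (abs_min_sub_min_le_max _ _ _ _)
      _ = |x - y| := by simp [abs_nonneg]
  have hcl_cont : Continuous cl := continuous_const.max (continuous_const.min continuous_id)
  have hpj_cont : Continuous pj := continuous_const.max (continuous_const.min continuous_id)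
  -- the truncated vector field
  set g : ℝ → ℝ → ℝ := fun t x => v (pj t) - f (pj t) (cl x) with hg
  obtain ⟨K, hK⟩ := aux_lip hf m M
  have hg_lip : ∀ t, LipschitzWith K (g t) := by
    intro t
    refine LipschitzWith.of_dist_le_mul fun x y => ?_
    have h1 : dist (g t x) (g t y) = |f (pj t) (cl y) - f (pj t) (cl x)| := by
      rw [Real.dist_eq]; rw [show g t x - g t y = f (pj t) (cl y) - f (pj t) (cl x) by
        simp only [hg]; ring]
    rw [h1, Real.dist_eq]
    calc |f (pj t) (cl y) - f (pj t) (cl x)|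
        ≤ K * |cl y - cl x| := hK _ (hpj_mem t) _ (hcl_mem y) _ (hcl_mem x)
      _ ≤ K * |y - x| := mul_le_mul_of_nonneg_left (hcl_lip y x) K.2
      _ = K * |x - y| := by rw [abs_sub_comm]
  -- bounds for the field
  obtain ⟨tv, htv, hvmax⟩ := isCompact_Icc.exists_isMaxOn (s := Set.Icc (0:ℝ) 1)
    (Set.nonempty_Icc.2 zero_le_one) (continuous_abs.comp hv).continuousOn
  obtain ⟨zf, hzf, hfmax⟩ := (isCompact_Icc.prod isCompact_Icc :
      IsCompact (Set.Icc (0:ℝ) 1 ×ˢ Set.Icc m M)).exists_isMaxOn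
    ⟨(0, m), h01, le_rfl, hmM⟩
    ((continuous_abs.comp hf.1.continuous).continuousOn)
  set B₀ : ℝ := |v tv| + |Function.uncurry f zf| with hB₀
  have hg_bd : ∀ t x, |g t x| ≤ B₀ := by
    intro t x
    have h1 : |v (pj t)| ≤ |v tv| := hvmax (hpj_mem t)
    have h2 : |f (pj t) (cl x)| ≤ |Function.uncurry f zf| :=
      hfmax (Set.mk_mem_prod (hpj_mem t) (hcl_mem x))
    calc |g t x| ≤ |v (pj t)| + |f (pj t) (cl x)| := abs_sub _ _
      _ ≤ B₀ := add_le_add h1 h2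
  -- Picard–Lindelöf solutions
  have hgcont_t : ∀ x, Continuous (fun t => g t x) := by
    intro x
    exact (hv.comp hpj_cont).sub
      (hf.1.continuous.comp (hpj_cont.prodMk continuous_const))
  have hex : ∀ a : ℝ, ∃ w : ℝ → ℝ, w 0 = a ∧
      ∀ t ∈ Set.Icc (0:ℝ) 1, HasDerivWithinAt w (g t (w t)) (Set.Icc 0 1) t := by
    intro a
    have hB0 : 0 ≤ B₀ := by rw [hB₀]; positivity
    have hPL : IsPicardLindelof g (tmin := 0) (tmax := 1) ⟨0, h01⟩ a ⟨B₀, hB0⟩ 0 ⟨B₀, hB0⟩ K :=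
      { lipschitzOnWith := fun t _ => (hg_lip t).lipschitzOnWith
        continuousOn := fun x _ => (hgcont_t x).continuousOn
        norm_le := fun t _ x _ => by rw [Real.norm_eq_abs]; exact hg_bd t x
        mul_max_le := by simp }
    obtain ⟨w, hw0, hwd⟩ := hPL.exists_eq_forall_mem_Icc_hasDerivWithinAt₀
    exact ⟨w, hw0, hwd⟩
  choose sol hsol0 hsolD using hex
  have hsolC : ∀ a, ContinuousOn (sol a) (Set.Icc 0 1) :=
    fun a t ht => (hsolD a t ht).continuousWithinAt
  -- trapping between α and β
  have htrap : ∀ a, α 0 ≤ a → a ≤ β 0 →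
      ∀ t ∈ Set.Icc (0:ℝ) 1, α t ≤ sol a t ∧ sol a t ≤ β t := by
    intro a ha1 ha2
    have hupper : ∀ t ∈ Set.Icc (0:ℝ) 1, sol a t ≤ β t := by
      refine aux_no_upcross (dW := fun t => g t (sol a t))
        (dB := fun t => v t - f t p + (Fp - V)) (hsolD a)
        (fun t _ => (hβd t).hasDerivWithinAt) (by rw [hsol0 a]; exact ha2) ?_
      intro t ht heq
      have htIcc : t ∈ Set.Icc (0:ℝ) 1 := ⟨ht.1, ht.2.le⟩
      have hβt : β t ∈ Set.Icc m M := ⟨by linarith [hβge t htIcc], hM htIcc⟩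
      have h1 : g t (sol a t) = v t - f t (β t) := by
        rw [heq, hg]; simp only []
        rw [hpj_id t htIcc, hcl_id _ hβt]
      show g t (sol a t) < v t - f t p + (Fp - V)
      rw [h1]
      have h2 : f t p ≤ f t (β t) := (aux_mono hD2 t).monotone (hβge t htIcc)
      linarith
    have hlower : ∀ t ∈ Set.Icc (0:ℝ) 1, α t ≤ sol a t := by
      have := aux_no_upcross (W := fun t => -(sol a t)) (B := fun t => -(α t))
        (dW := fun t => -(g t (sol a t)))
        (dB := fun t => -(v t - f t q + (Fq - V)))
        (fun t ht => (hsolD a t ht).neg)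
        (fun t _ => ((hαd t).hasDerivWithinAt).neg)
        (by simp only [neg_le_neg_iff]; rw [hsol0 a]; exact ha1) ?_
      · intro t ht
        have h3 : -sol a t ≤ -α t := this t ht
        linarith
      intro t ht heq
      have htIcc : t ∈ Set.Icc (0:ℝ) 1 := ⟨ht.1, ht.2.le⟩
      have heq' : sol a t = α t := by linarith [neg_inj.1 heq]
      have hαt : α t ∈ Set.Icc m M := ⟨hm htIcc, by linarith [hαle t htIcc]⟩
      have h1 : g t (sol a t) = v t - f t (α t) := by
        rw [heq', hg]; simp only []
        rw [hpj_id t htIcc, hcl_id _ hαt]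
      show -(g t (sol a t)) < -(v t - f t q + (Fq - V))
      rw [h1]
      have h2 : f t (α t) ≤ f t q := (aux_mono hD2 t).monotone (hαle t htIcc)
      simp only [neg_sub, neg_add]
      linarith
    exact fun t ht => ⟨hlower t ht, hupper t ht⟩
  -- the Poincaré map is Lipschitz
  have hIci : ∀ a, ∀ t ∈ Set.Ico (0:ℝ) 1, HasDerivWithinAt (sol a) (g t (sol a t)) (Set.Ici t) t :=
    fun a t ht => (hsolD a t ⟨ht.1, ht.2.le⟩).mono_of_mem_nhdsWithin (Icc_mem_nhdsGE_of_mem ⟨ht.1, ht.2⟩)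
  have hgron : ∀ a b : ℝ, dist (sol a 1) (sol b 1) ≤ dist a b * Real.exp (K * (1 - 0)) := by
    intro a b
    have := dist_le_of_trajectories_ODE (v := g) hg_lip (hsolC a) (hIci a) (hsolC b) (hIci b)
      (by rw [hsol0 a, hsol0 b]) 1 h11
    simpa using this
  set P : ℝ → ℝ := fun a => sol a 1 with hP
  have hPcont : Continuous P := by
    refine LipschitzWith.continuous (K := Real.toNNReal (Real.exp (K * (1 - 0))))
      (LipschitzWith.of_dist_le_mul fun a b => ?_)
    rw [Real.coe_toNNReal _ (Real.exp_pos _).le, mul_comm]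
    exact hgron a b
  have hαβ0 : α 0 ≤ β 0 := by
    have := hαle 0 h01; have := hβge 0 h01; linarith
  have hPα : α 0 ≤ P (α 0) := by
    have h1 := (htrap (α 0) le_rfl hαβ0 1 h11).1
    rw [hα10] at h1; exact h1
  have hPβ : P (β 0) ≤ β 0 := by
    have h1 := (htrap (β 0) hαβ0 le_rfl 1 h11).2
    rw [hβ10] at h1; exact h1
  -- fixed point via IVT
  have hIVT : ∃ a ∈ Set.Icc (α 0) (β 0), P a - a = 0 := by
    have hψ : ContinuousOn (fun a => P a - a) (Set.Icc (α 0) (β 0)) :=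
      (hPcont.sub continuous_id).continuousOn
    have h0mem : (0:ℝ) ∈ Set.Icc (P (β 0) - β 0) (P (α 0) - α 0) :=
      ⟨by linarith, by linarith⟩
    obtain ⟨a, ha, hfa⟩ := intermediate_value_Icc' hαβ0 hψ h0mem
    exact ⟨a, ha, hfa⟩
  obtain ⟨as, hasmem, hfix⟩ := hIVT
  set w : ℝ → ℝ := sol as with hw
  have hw0 : w 0 = as := hsol0 as
  have hw1 : w 1 = w 0 := by
    show sol as 1 = sol as 0
    rw [hsol0 as]
    have : P as = as := by linarith
    exact this
  have hwtrap : ∀ t ∈ Set.Icc (0:ℝ) 1, w t ∈ Set.Icc m M := by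
    intro t ht
    obtain ⟨h1, h2⟩ := htrap as hasmem.1 hasmem.2 t ht
    exact ⟨le_trans (hm ht) h1, le_trans h2 (hM ht)⟩
  have hwD : ∀ t ∈ Set.Icc (0:ℝ) 1, HasDerivWithinAt w (v t - f t (w t)) (Set.Icc 0 1) t := by
    intro t ht
    have h1 := hsolD as t ht
    have h2 : g t (w t) = v t - f t (w t) := by
      rw [hg]; simp only []
      rw [hpj_id t ht, hcl_id _ (hwtrap t ht)]
    rwa [h2] at h1
  clear hwtrap htrap hsolD hsol0 hsolC hgron hIci hPcont hPα hPβ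
  -- periodic shift identities
  have hvshift : ∀ (x : ℝ) (n : ℤ), v (x - n) = v x := by
    intro x n
    have hvP : Function.Periodic v 1 := hvper
    have := hvP.sub_int_mul_eq (x := x) n
    simpa using this
  have hfshift : ∀ (x y : ℝ) (n : ℤ), f (x - n) y = f x y := by
    intro x y n
    have hPf : Function.Periodic (fun t => f t y) 1 := fun s => hf.2 s y
    have := hPf.sub_int_mul_eq (x := x) n
    simpa using this
  -- the periodic extension
  set u : ℝ → ℝ := fun t => w (Int.fract t) with hu
  have hloc : ∀ (n : ℤ) (s : ℝ), (n:ℝ) ≤ s → s < n + 1 → u s = w (s - n) := by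
    intro n s h1 h2
    have hfl : ⌊s⌋ = n := Int.floor_eq_iff.2 ⟨h1, by push_cast; exact h2⟩
    rw [hu]; simp only []
    rw [Int.fract, hfl]
  have hud : ∀ t, HasDerivAt u (v t - f t (u t)) t := by
    intro t
    set n : ℤ := ⌊t⌋ with hn
    have hti : (n:ℝ) ≤ t := Int.floor_le t
    have hti2 : t < n + 1 := by
      have := Int.lt_floor_add_one t; push_cast at this ⊢; exact this
    by_cases hfr : Int.fract t = 0
    · -- integer case
      have htn : t = (n:ℝ) := by
        have h1 : Int.fract t = t - n := rfl
        rw [h1] at hfr; linarith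
      have hut : u t = w 0 := by rw [hu]; simp only []; rw [hfr]
      -- right derivative
      have hR0 : HasDerivWithinAt w (v 0 - f 0 (w 0)) (Set.Ici 0) 0 :=
        (hwD 0 h01).mono_of_mem_nhdsWithin (Icc_mem_nhdsGE_of_mem ⟨le_rfl, one_pos⟩)
      have hinnerR : HasDerivWithinAt (fun s : ℝ => s - (n:ℝ)) 1 (Set.Ici t) t :=
        ((hasDerivAt_id t).sub_const _).hasDerivWithinAt
      have hmapR : Set.MapsTo (fun s : ℝ => s - (n:ℝ)) (Set.Ici t) (Set.Ici 0) := by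
        intro s hs
        simp only [Set.mem_Ici] at hs ⊢
        linarith [htn ▸ hs]
      have hcompR : HasDerivWithinAt (fun s => w (s - (n:ℝ)))
          ((v 0 - f 0 (w 0)) * 1) (Set.Ici t) t := by
        refine HasDerivWithinAt.comp t ?_ hinnerR hmapR
        rw [show t - (n:ℝ) = 0 by linarith]
        exact hR0
      have hcongrR : HasDerivWithinAt u ((v 0 - f 0 (w 0)) * 1) (Set.Ici t) t := by
        refine hcompR.congr_of_eventuallyEq ?_ ?_
        · filter_upwards [Filter.inter_mem self_mem_nhdsWithin
            (mem_nhdsWithin_of_mem_nhds (Iio_mem_nhds (by linarith : t < (n:ℝ) + 1)))] with s hs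
          exact hloc n s (by have := hs.1; simp only [Set.mem_Ici] at this; linarith) hs.2
        · rw [hloc n t hti hti2]
      -- left derivative
      have hL1 : HasDerivWithinAt w (v 1 - f 1 (w 1)) (Set.Iic 1) 1 :=
        (hwD 1 h11).mono_of_mem_nhdsWithin (Icc_mem_nhdsLE_of_mem ⟨one_pos, le_rfl⟩)
      have hinnerL : HasDerivWithinAt (fun s : ℝ => s - ((n:ℝ) - 1)) 1 (Set.Iic t) t :=
        ((hasDerivAt_id t).sub_const _).hasDerivWithinAt
      have hmapL : Set.MapsTo (fun s : ℝ => s - ((n:ℝ) - 1)) (Set.Iic t) (Set.Iic 1) := by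
        intro s hs
        simp only [Set.mem_Iic] at hs ⊢
        linarith [htn ▸ hs]
      have hcompL : HasDerivWithinAt (fun s => w (s - ((n:ℝ) - 1)))
          ((v 1 - f 1 (w 1)) * 1) (Set.Iic t) t := by
        refine HasDerivWithinAt.comp t ?_ hinnerL hmapL
        rw [show t - ((n:ℝ) - 1) = 1 by linarith]
        exact hL1
      have hcongrL : HasDerivWithinAt u ((v 1 - f 1 (w 1)) * 1) (Set.Iic t) t := by
        refine hcompL.congr_of_eventuallyEq ?_ ?_
        · filter_upwards [Filter.inter_mem self_mem_nhdsWithin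
            (mem_nhdsWithin_of_mem_nhds (Ioi_mem_nhds (by linarith : (n:ℝ) - 1 < t)))] with s hs
          have hs1 : s ≤ t := hs.1
          have hs2 : (n:ℝ) - 1 < s := hs.2
          rcases eq_or_lt_of_le hs1 with he | hl
          · rw [he, hloc n t hti hti2, show t - (n:ℝ) = 0 by linarith,
              show t - ((n:ℝ) - 1) = 1 by linarith, hw1]
          · have hcast : ((n - 1 : ℤ) : ℝ) = (n:ℝ) - 1 := by push_cast; ring
            have := hloc (n - 1) s (by rw [hcast]; linarith) (by rw [hcast]; push_cast; linarith [htn ▸ hl])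
            rw [this, hcast]
        · rw [hloc n t hti hti2, show t - (n:ℝ) = 0 by linarith,
            show t - ((n:ℝ) - 1) = 1 by linarith, hw1]
      -- combine
      have hval : v 1 - f 1 (w 1) = v 0 - f 0 (w 0) := by
        have h1 : v 1 = v 0 := by simpa using hvper 0
        have h2 : f 1 (w 0) = f 0 (w 0) := by simpa using hf.2 0 (w 0)
        rw [hw1, h1, h2]
      rw [hval] at hcongrL
      have huniv := hcongrL.union hcongrR
      rw [Set.Iic_union_Ici] at huniv
      have hfin : HasDerivAt u ((v 0 - f 0 (w 0)) * 1) t := by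
        rw [← hasDerivWithinAt_univ]; exact huniv
      have hvalfin : (v 0 - f 0 (w 0)) * 1 = v t - f t (u t) := by
        rw [mul_one, hut]
        have h1 : v 0 = v t := by
          have := hvshift t n
          rw [show t - (n:ℝ) = 0 by linarith] at this
          exact this
        have h2 : f 0 (w 0) = f t (w 0) := by
          have := hfshift t (w 0) n
          rw [show t - (n:ℝ) = 0 by linarith] at this
          exact this
        rw [h1, h2]
      rwa [hvalfin] at hfin
    · -- non-integer case
      set θ : ℝ := Int.fract t with hθ
      have hθt : θ = t - n := rfl
      have hθpos : 0 < θ := lt_of_le_of_ne (Int.fract_nonneg t) (Ne.symm hfr)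
      have hθlt : θ < 1 := Int.fract_lt_one t
      have hdw : HasDerivAt w (v θ - f θ (w θ)) θ :=
        (hwD θ ⟨hθpos.le, hθlt.le⟩).hasDerivAt (Icc_mem_nhds hθpos hθlt)
      have hinner : HasDerivAt (fun s : ℝ => s - (n:ℝ)) 1 t :=
        (hasDerivAt_id t).sub_const _
      have hcomp : HasDerivAt (fun s => w (s - (n:ℝ))) ((v θ - f θ (w θ)) * 1) t := by
        refine HasDerivAt.comp t ?_ hinner
        rw [show t - (n:ℝ) = θ from hθt.symm]
        exact hdw
      have hcongr : HasDerivAt u ((v θ - f θ (w θ)) * 1) t := by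
        refine hcomp.congr_of_eventuallyEq ?_
        filter_upwards [Ioo_mem_nhds (by rw [hθt] at hθpos; linarith : (n:ℝ) < t)
          (by rw [hθt] at hθlt; linarith : t < (n:ℝ) + 1)] with s hs
        exact hloc n s hs.1.le hs.2
      have hval : (v θ - f θ (w θ)) * 1 = v t - f t (u t) := by
        rw [mul_one]
        have h1 : v θ = v t := by rw [hθt]; exact hvshift t n
        have h2 : f θ (w θ) = f t (u t) := by
          have : u t = w θ := rfl
          rw [this, hθt]
          exact hfshift t (w θ) n
        rw [h1, h2]
      rwa [hval] at hcongr
  -- conclude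
  have hdiffu : Differentiable ℝ u := fun t => (hud t).differentiableAt
  have hderivu : deriv u = fun t => v t - f t (u t) := funext fun t => (hud t).deriv
  have hucont : Continuous u := hdiffu.continuous
  refine ⟨u, ?_, ?_, ?_⟩
  · rw [contDiff_one_iff_deriv]
    refine ⟨hdiffu, ?_⟩
    rw [hderivu]
    exact hv.sub (aux_cont_t hf hucont)
  · intro t
    rw [hu]; simp only []
    congr 1
    have := Int.fract_add_intCast t 1
    push_cast at this
    exact this
  · intro t
    rw [hderivu]; simp only []; ring

/-- **Proposition 4.1(b)** (solution level). Assume `D₂f > 0` everywhere and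
let, in the extended reals, `I₊ = ∫₀¹ lim_{x→+∞} f(t,x) dt ∈ (−∞,+∞]` and
`I₋ = ∫₀¹ lim_{x→−∞} f(t,x) dt ∈ [−∞,+∞)`; by monotone convergence these
extended-real integrals of `f₊ = sup_x f(·,x)` and `f₋ = inf_x f(·,x)` are
`I₊ = ⨆ x, ∫₀¹ f(t,x) dt` and `I₋ = ⨅ x, ∫₀¹ f(t,x) dt`.  Then for every
continuous 1-periodic `v` the equation `u' + f(t,u) = v` admits a periodic
solution iff `I₋ < ∫₀¹ v < I₊`, in which case the solution is unique. -/
theorem stmt11 (f : ℝ → ℝ → ℝ) (hf : Nonlinearity f)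
    (hD2 : ∀ t x, 0 < deriv (f t) x)
    (Iplus Iminus : EReal)
    (hIplus : Iplus = ⨆ x : ℝ, ((∫ t in (0:ℝ)..1, f t x : ℝ) : EReal))
    (hIminus : Iminus = ⨅ x : ℝ, ((∫ t in (0:ℝ)..1, f t x : ℝ) : EReal))
    (v : ℝ → ℝ) (hv : Continuous v) (hvper : Periodic1 v) :
    ((∃ u : ℝ → ℝ, IsPeriodicSol f v u) ↔
      (Iminus < ((∫ t in (0:ℝ)..1, v t : ℝ) : EReal) ∧
        ((∫ t in (0:ℝ)..1, v t : ℝ) : EReal) < Iplus)) ∧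
    (∀ u₁ u₂ : ℝ → ℝ, IsPeriodicSol f v u₁ → IsPeriodicSol f v u₂ →
      u₁ = u₂) := by
  constructor
  · constructor
    · rintro ⟨u, hu⟩
      have hVeq := aux_sol_integral hf hv hu
      obtain ⟨⟨x₁, hx₁⟩, ⟨x₂, hx₂⟩⟩ := aux_forward_bounds hf hD2 hu.1.continuous
      constructor
      · rw [hIminus]
        refine lt_of_le_of_lt (iInf_le _ x₂) ?_
        rw [hVeq]
        exact_mod_cast hx₂
      · rw [hIplus]
        refine lt_of_lt_of_le ?_ (le_iSup _ x₁)
        rw [hVeq]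
        exact_mod_cast hx₁
    · rintro ⟨hlo, hhi⟩
      rw [hIplus] at hhi
      rw [hIminus] at hlo
      obtain ⟨p, hp⟩ := lt_iSup_iff.1 hhi
      obtain ⟨q, hq⟩ := iInf_lt_iff.1 hlo
      exact aux_exists hf hD2 hv hvper (by exact_mod_cast hq) (by exact_mod_cast hp)
  · intro u₁ u₂ h1 h2
    exact aux_uniq hD2 h1 h2
end

section
/- Let f : ℝ × ℝ → ℝ be a proper nonlinearity such that for every t the function x ↦ f(t,x) is strictly increasing. Then for every continuous 1-periodic v : ℝ → ℝ there exists exactly one periodic solution of u' + f(t,u) = v. -/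
open Filter Set Topology
open scoped NNReal

/-- A nonlinearity is proper if `inf_{t ∈ [0,1]} |f(t,x)| → ∞` as `|x| → ∞`. -/
def ProperNL (f : ℝ → ℝ → ℝ) : Prop :=
  Tendsto (fun x : ℝ => sInf ((fun t => |f t x|) '' Set.Icc (0:ℝ) 1))
    (Filter.comap (fun x : ℝ => |x|) Filter.atTop) Filter.atTop

lemma per_eval {g : ℝ → ℝ} (hg : Periodic1 g) (t : ℝ) : g t = g (Int.fract t) := by
  have hp : Function.Periodic g 1 := hg
  have h := hp.sub_int_mul_eq (x := t) (n := ⌊t⌋)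
  simp only [mul_one] at h
  rw [Int.fract, h]

lemma fract_mem01 (t : ℝ) : Int.fract t ∈ Icc (0:ℝ) 1 :=
  ⟨Int.fract_nonneg t, (Int.fract_lt_one t).le⟩

-- bound on a continuous periodic function
lemma per_bound {g : ℝ → ℝ} (hg : Periodic1 g) (hc : Continuous g) :
    ∃ K : ℝ, 0 ≤ K ∧ ∀ t, |g t| ≤ K := by
  obtain ⟨x0, -, hx0⟩ := isCompact_Icc.exists_isMaxOn (s := Icc (0:ℝ) 1)
    ⟨0, by norm_num⟩ (hc.abs.continuousOn)
  refine ⟨|g x0|, abs_nonneg _, fun t => ?_⟩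
  rw [per_eval hg t]
  exact hx0 (fract_mem01 t)

-- properness gives: for all C, eventually (in both directions) |f t x| > C uniformly on [0,1]
lemma proper_large (f : ℝ → ℝ → ℝ) (hproper : ProperNL f) (C : ℝ) :
    ∃ X : ℝ, 0 < X ∧ ∀ x : ℝ, X ≤ |x| → ∀ t ∈ Icc (0:ℝ) 1, C < |f t x| := by
  have h1 : ∀ᶠ x : ℝ in Filter.comap (fun x : ℝ => |x|) Filter.atTop,
      C < sInf ((fun t => |f t x|) '' Icc (0:ℝ) 1) :=
    hproper.eventually (eventually_gt_atTop C)
  rw [eventually_comap] at h1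
  rw [eventually_atTop] at h1
  obtain ⟨X, hX⟩ := h1
  refine ⟨max X 1, by positivity, fun x hx t ht => ?_⟩
  have hs : C < sInf ((fun t => |f t x|) '' Icc (0:ℝ) 1) :=
    hX |x| (le_trans (le_max_left _ _) hx) x rfl
  refine lt_of_lt_of_le hs (csInf_le ?_ ?_)
  · exact ⟨0, fun y hy => by obtain ⟨t', -, rfl⟩ := hy; positivity⟩
  · exact ⟨t, ht, rfl⟩

section Barrier
variable {f : ℝ → ℝ → ℝ}

lemma cont_t (hf : Nonlinearity f) (x : ℝ) : Continuous (fun t => f t x) :=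
  hf.1.continuous.comp (continuous_id.prodMk continuous_const)

lemma cont_x (hf : Nonlinearity f) (t : ℝ) : Continuous (f t) :=
  hf.1.continuous.comp (continuous_const.prodMk continuous_id)

lemma dichotomy (hf : Nonlinearity f) {C x : ℝ} (hC : 0 ≤ C) (hx : ∀ t ∈ Icc (0:ℝ) 1, C < |f t x|) :
    (∀ t ∈ Icc (0:ℝ) 1, C < f t x) ∨ (∀ t ∈ Icc (0:ℝ) 1, f t x < -C) := by
  by_cases h : ∀ t ∈ Icc (0:ℝ) 1, C < f t x
  · exact Or.inl h
  push_neg at h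
  obtain ⟨t1, ht1, hle⟩ := h
  have hneg : f t1 x < -C := by
    rcases abs_cases (f t1 x) with ⟨h1, h2⟩ | ⟨h1, h2⟩ <;> have := hx t1 ht1 <;> linarith
  right
  intro t ht
  by_contra hge
  push_neg at hge
  have hpos : C < f t x := by
    rcases (lt_abs.mp (hx t ht)) with h | h
    · exact h
    · linarith
  -- IVT gives a zero of s ↦ f s x between t1 and t
  have hcont : ContinuousOn (fun s => f s x) (uIcc t1 t) := (cont_t hf x).continuousOn
  have h0 : (0:ℝ) ∈ uIcc (f t1 x) (f t x) := by
    rw [mem_uIcc]; left; constructor <;> linarith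
  obtain ⟨t2, ht2, hft2⟩ := intermediate_value_uIcc hcont h0
  have ht2' : t2 ∈ Icc (0:ℝ) 1 := by
    have : uIcc t1 t ⊆ Icc (0:ℝ) 1 := by
      rw [← uIcc_of_le (zero_le_one (α := ℝ))]
      exact uIcc_subset_uIcc (by rw [uIcc_of_le zero_le_one]; exact ht1)
        (by rw [uIcc_of_le zero_le_one]; exact ht)
    exact this ht2
  have hz : f t2 x = 0 := hft2
  have := hx t2 ht2'
  rw [hz] at this
  simp at this
  linarith

lemma barrier (hf : Nonlinearity f) (hproper : ProperNL f)
    (hmono : ∀ t, StrictMono (f t)) {Kv : ℝ} (hKv : 0 ≤ Kv) :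
    ∃ B : ℝ, 0 < B ∧ (∀ t, Kv < f t B) ∧ (∀ t, f t (-B) < -Kv) := by
  obtain ⟨X, hX, hXp⟩ := proper_large f hproper (max Kv |f 0 0|)
  -- positive witness
  have hx0 : ∃ x0, Kv < f 0 x0 := by
    by_contra h
    push_neg at h
    have h1 := hXp X (by rw [abs_of_pos hX]) 0 (by norm_num)
    have h2 : f 0 0 ≤ f 0 X := (hmono 0).monotone hX.le
    have h3 : |f 0 X| ≤ max Kv |f 0 0| := by
      rw [abs_le]
      constructor
      · have := neg_abs_le (f 0 0); have := le_max_right Kv |f 0 0|; linarith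
      · exact le_trans (h X) (le_max_left _ _)
    linarith
  have hx1 : ∃ x1, f 0 x1 < -Kv := by
    by_contra h
    push_neg at h
    have h1 := hXp (-X) (by rw [abs_neg, abs_of_pos hX]) 0 (by norm_num)
    have h2 : f 0 (-X) ≤ f 0 0 := (hmono 0).monotone (by linarith)
    have h3 : |f 0 (-X)| ≤ max Kv |f 0 0| := by
      rw [abs_le]
      constructor
      · have := h (-X); have := le_max_left Kv |f 0 0|; linarith
      · have := le_abs_self (f 0 0); have := le_max_right Kv |f 0 0|; linarith
    linarith
  obtain ⟨x0, hx0⟩ := hx0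
  obtain ⟨x1, hx1⟩ := hx1
  set B := max X (max x0 (-x1)) with hB
  have hBX : X ≤ B := le_max_left _ _
  have hBx0 : x0 ≤ B := le_trans (le_max_left _ _) (le_max_right _ _)
  have hBx1 : -B ≤ x1 := by
    have : -x1 ≤ B := le_trans (le_max_right _ _) (le_max_right _ _)
    linarith
  have hBpos : 0 < B := lt_of_lt_of_le hX hBX
  have habs : ∀ t ∈ Icc (0:ℝ) 1, Kv < |f t B| := fun t ht =>
    lt_of_le_of_lt (le_max_left _ _) (hXp B (by rw [abs_of_pos hBpos]; exact hBX) t ht)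
  have habs' : ∀ t ∈ Icc (0:ℝ) 1, Kv < |f t (-B)| := fun t ht =>
    lt_of_le_of_lt (le_max_left _ _) (hXp (-B) (by rw [abs_neg, abs_of_pos hBpos]; exact hBX) t ht)
  have hup : ∀ t ∈ Icc (0:ℝ) 1, Kv < f t B := by
    rcases dichotomy hf hKv habs with h | h
    · exact h
    · exfalso
      have h1 := h 0 (by norm_num)
      have h2 : f 0 x0 ≤ f 0 B := (hmono 0).monotone hBx0
      linarith
  have hdown : ∀ t ∈ Icc (0:ℝ) 1, f t (-B) < -Kv := by
    rcases dichotomy hf hKv habs' with h | h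
    · exfalso
      have h1 := h 0 (by norm_num)
      have h2 : f 0 (-B) ≤ f 0 x1 := (hmono 0).monotone hBx1
      linarith
    · exact h
  refine ⟨B, hBpos, fun t => ?_, fun t => ?_⟩
  · have hper : Periodic1 (fun s => f s B) := fun s => hf.2 s B
    rw [per_eval hper t]
    exact hup _ (fract_mem01 t)
  · have hper : Periodic1 (fun s => f s (-B)) := fun s => hf.2 s (-B)
    rw [per_eval hper t]
    exact hdown _ (fract_mem01 t)

end Barrier

section Lip
variable {f : ℝ → ℝ → ℝ}

lemma lip_band (hf : Nonlinearity f) {b : ℝ} (hb : 0 ≤ b) :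
    ∃ L : ℝ≥0, ∀ t, LipschitzOnWith L (f t) (Icc (-b) b) := by
  set F := Function.uncurry f with hF
  set K : Set (ℝ × ℝ) := Icc (0:ℝ) 1 ×ˢ Icc (-b) b with hK
  have hKc : IsCompact K := isCompact_Icc.prod isCompact_Icc
  have hKconv : Convex ℝ K := (convex_Icc _ _).prod (convex_Icc _ _)
  have hf1 : ContDiff ℝ 1 F := hf.1.of_le (by exact_mod_cast le_top)
  have hdf : Continuous fun y => ‖fderiv ℝ F y‖ :=
    (hf1.continuous_fderiv one_ne_zero).norm
  obtain ⟨y0, -, hy0⟩ := hKc.exists_isMaxOn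
    ⟨(0, 0), by constructor <;> constructor <;> simp [hb]⟩ hdf.continuousOn
  set L : ℝ≥0 := ‖fderiv ℝ F y0‖₊ with hL
  have hjoint : LipschitzOnWith L F K := by
    apply Convex.lipschitzOnWith_of_nnnorm_fderiv_le
      (fun y _ => (hf1.differentiable one_ne_zero).differentiableAt)
      (fun y hy => hy0 hy) hKconv
  refine ⟨L, fun t => ?_⟩
  have hfr : Int.fract t ∈ Icc (0:ℝ) 1 := fract_mem01 t
  have heq : ∀ x, f t x = f (Int.fract t) x := fun x =>
    per_eval (g := fun s => f s x) (fun s => hf.2 s x) t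
  rw [lipschitzOnWith_iff_dist_le_mul]
  intro x hx y hy
  rw [heq x, heq y]
  have h1 := (lipschitzOnWith_iff_dist_le_mul.mp hjoint)
    (Int.fract t, x) ⟨hfr, hx⟩ (Int.fract t, y) ⟨hfr, hy⟩
  have h2 : dist ((Int.fract t, x) : ℝ × ℝ) (Int.fract t, y) = dist x y := by
    rw [Prod.dist_eq]; simp [dist_nonneg]
  calc dist (F (Int.fract t, x)) (F (Int.fract t, y)) ≤ L * dist ((Int.fract t, x) : ℝ × ℝ) (Int.fract t, y) := h1
    _ = L * dist x y := by rw [h2]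

lemma bound_band (hf : Nonlinearity f) {b : ℝ} (hb : 0 ≤ b) :
    ∃ Cf : ℝ, 0 ≤ Cf ∧ ∀ t, ∀ x ∈ Icc (-b) b, |f t x| ≤ Cf := by
  set F := Function.uncurry f with hF
  set K : Set (ℝ × ℝ) := Icc (0:ℝ) 1 ×ˢ Icc (-b) b with hK
  have hKc : IsCompact K := isCompact_Icc.prod isCompact_Icc
  obtain ⟨y0, -, hy0⟩ := hKc.exists_isMaxOn
    ⟨(0, 0), by constructor <;> constructor <;> simp [hb]⟩
    (hf.1.continuous.abs.continuousOn)
  refine ⟨|F y0|, abs_nonneg _, fun t x hx => ?_⟩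
  have heq : f t x = f (Int.fract t) x :=
    per_eval (g := fun s => f s x) (fun s => hf.2 s x) t
  rw [heq]
  exact hy0 (Set.mk_mem_prod (fract_mem01 t) hx)

end Lip

section Exist
variable {f : ℝ → ℝ → ℝ} {v : ℝ → ℝ} {Kv B Cf : ℝ} {L : ℝ≥0}

lemma exists_sol
    (hfc : Continuous (Function.uncurry f))
    (hv : Continuous v) (hKv : ∀ t, |v t| ≤ Kv)
    (hBpos : 0 < B) (hBup : ∀ t, Kv < f t B) (hBdown : ∀ t, f t (-B) < -Kv)
    (hL : ∀ t, LipschitzOnWith L (f t) (Icc (-B) B))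
    (hCf : ∀ t, ∀ x ∈ Icc (-B) B, |f t x| ≤ Cf)
    {p : ℝ} (hp : p ∈ Icc (-B) B) :
    ∃ u : ℝ → ℝ, u 0 = p ∧ (∀ t ∈ Icc (0:ℝ) 1, u t ∈ Icc (-B) B) ∧
      ∀ t ∈ Icc (0:ℝ) 1, HasDerivWithinAt u (v t - f t (u t)) (Icc (0:ℝ) 1) t := by
  have hKv0 : 0 ≤ Kv := le_trans (abs_nonneg _) (hKv 0)
  have hCf0 : 0 ≤ Cf := le_trans (abs_nonneg _) (hCf 0 0 ⟨by linarith, hBpos.le⟩)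
  have hBB : -B ≤ B := by linarith
  set proj : ℝ → ℝ := fun x => (projIcc (-B) B hBB x : ℝ) with hprojdef
  have hproj_mem : ∀ x, proj x ∈ Icc (-B) B := fun x => (projIcc (-B) B hBB x).2
  have hproj_lip : LipschitzWith 1 proj := by
    have := (isometry_subtype_coe (s := Icc (-B) B)).lipschitz.comp
      (LipschitzWith.projIcc (a := -B) (b := B) hBB)
    exact (by simpa using this : LipschitzWith 1 (Subtype.val ∘ projIcc (-B) B hBB))
  have hproj_cont : Continuous proj := hproj_lip.continuous
  set g : ℝ → ℝ → ℝ := fun t x => v t - f t (proj x) with hgdef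
  -- Lipschitz bound for g
  have hg_lip : ∀ t, LipschitzWith L (g t) := by
    intro t
    have h1 : LipschitzOnWith (L * 1) ((f t) ∘ proj) univ :=
      (hL t).comp (hproj_lip.lipschitzOnWith) (fun x _ => hproj_mem x)
    rw [lipschitzOnWith_univ, mul_one] at h1
    have : LipschitzWith L (fun x => v t - (f t) (proj x)) := by
      have h2 : LipschitzWith 1 (fun y : ℝ => v t - y) :=
        LipschitzWith.of_dist_le_mul (fun a b => by
          rw [Real.dist_eq, Real.dist_eq, NNReal.coe_one, one_mul,
            show v t - a - (v t - b) = -(a - b) by ring, abs_neg])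
      exact (by simpa using h2.comp h1 : LipschitzWith L ((fun y => v t - y) ∘ f t ∘ proj))
    exact this
  set C : ℝ := Kv + Cf with hCdef
  have hg_bound : ∀ t x, |g t x| ≤ C := by
    intro t x
    have h1 := hKv t
    have h2 := hCf t (proj x) (hproj_mem x)
    calc |g t x| ≤ |v t| + |f t (proj x)| := abs_sub _ _
      _ ≤ C := by rw [hCdef]; linarith
  have hC0 : 0 ≤ C := by positivity
  -- Picard–Lindelöf
  have hPL : IsPicardLindelof g (tmin := 0) (tmax := 1) ⟨0, by constructor <;> norm_num⟩ p
      ⟨C, hC0⟩ 0 ⟨C, hC0⟩ L :=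
    { lipschitzOnWith := fun t _ => (hg_lip t).lipschitzOnWith
      continuousOn := fun x _ => ((hv.sub ((hfc.comp (continuous_id.prodMk continuous_const)))).continuousOn)
      norm_le := fun t _ x _ => by
        rw [Real.norm_eq_abs]; exact hg_bound t x
      mul_max_le := by simp }
  obtain ⟨u, hu0', hu⟩ := hPL.exists_eq_forall_mem_Icc_hasDerivWithinAt₀
  have hu0 : u 0 = p := hu0'
  have hucont : ContinuousOn u (Icc (0:ℝ) 1) := fun t ht => (hu t ht).continuousWithinAt
  -- invariance
  have hinv : ∀ t ∈ Icc (0:ℝ) 1, u t ∈ Icc (-B) B := by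
    intro t1 ht1
    constructor
    · -- lower bound
      by_contra hlt
      push_neg at hlt
      set S := {t | t ∈ Icc (0:ℝ) t1 ∧ -B ≤ u t} with hS
      have hS0 : (0:ℝ) ∈ S := ⟨⟨le_refl 0, ht1.1⟩, by rw [hu0]; exact hp.1⟩
      have hSbdd : BddAbove S := ⟨t1, fun x hx => hx.1.2⟩
      have hSclosed : IsClosed S := by
        have : S = Icc 0 t1 ∩ u ⁻¹' (Ici (-B)) := rfl
        rw [this]
        exact ContinuousOn.preimage_isClosed_of_isClosed
          (hucont.mono (Icc_subset_Icc_right ht1.2)) isClosed_Icc isClosed_Ici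
      set s := sSup S with hs
      have hsS : s ∈ S := hSclosed.csSup_mem ⟨0, hS0⟩ hSbdd
      have hst1 : s < t1 := by
        rcases lt_or_eq_of_le (hsS.1.2) with h | h
        · exact h
        · exfalso; rw [h] at hsS; linarith [hsS.2]
      have hmid : ∀ τ ∈ Ioc s t1, u τ < -B := by
        intro τ hτ
        by_contra hge
        push_neg at hge
        have : τ ∈ S := ⟨⟨le_trans (le_csSup hSbdd hS0) hτ.1.le, hτ.2⟩, hge⟩
        exact absurd (le_csSup hSbdd this) (not_le.mpr hτ.1)
      have hs0 : 0 ≤ s := le_csSup hSbdd hS0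
      -- derivative positive on Ioo s t1
      have hderiv : ∀ τ ∈ interior (Icc s t1), 0 < deriv u τ := by
        rw [interior_Icc]
        intro τ hτ
        have hτ01 : τ ∈ Ioo (0:ℝ) 1 := ⟨lt_of_le_of_lt hs0 hτ.1, lt_of_lt_of_le hτ.2 ht1.2⟩
        have hda : HasDerivAt u (g τ (u τ)) τ :=
          (hu τ (Ioo_subset_Icc_self hτ01)).hasDerivAt (Icc_mem_nhds hτ01.1 hτ01.2)
        rw [hda.deriv]
        have hub : u τ < -B := hmid τ ⟨hτ.1, hτ.2.le⟩
        have hproju : proj (u τ) = -B := by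
          rw [hprojdef]
          simp only
          rw [projIcc_of_le_left hBB hub.le]
        rw [hgdef]
        simp only [hproju]
        have := hBdown τ
        have := hKv τ
        have := neg_abs_le (v τ)
        linarith
      have hanti : StrictMonoOn u (Icc s t1) :=
        strictMonoOn_of_deriv_pos (convex_Icc s t1)
          (hucont.mono (Icc_subset_Icc hs0 ht1.2)) hderiv
      have := hanti (left_mem_Icc.mpr hst1.le) (right_mem_Icc.mpr hst1.le) hst1
      have hmid1 := hmid t1 ⟨hst1, le_refl _⟩
      linarith [hsS.2]
    · -- upper bound
      by_contra hlt
      push_neg at hlt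
      set S := {t | t ∈ Icc (0:ℝ) t1 ∧ u t ≤ B} with hS
      have hS0 : (0:ℝ) ∈ S := ⟨⟨le_refl 0, ht1.1⟩, by rw [hu0]; exact hp.2⟩
      have hSbdd : BddAbove S := ⟨t1, fun x hx => hx.1.2⟩
      have hSclosed : IsClosed S := by
        have : S = Icc 0 t1 ∩ u ⁻¹' (Iic B) := rfl
        rw [this]
        exact ContinuousOn.preimage_isClosed_of_isClosed
          (hucont.mono (Icc_subset_Icc_right ht1.2)) isClosed_Icc isClosed_Iic
      set s := sSup S with hs
      have hsS : s ∈ S := hSclosed.csSup_mem ⟨0, hS0⟩ hSbdd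
      have hst1 : s < t1 := by
        rcases lt_or_eq_of_le (hsS.1.2) with h | h
        · exact h
        · exfalso; rw [h] at hsS; linarith [hsS.2]
      have hmid : ∀ τ ∈ Ioc s t1, B < u τ := by
        intro τ hτ
        by_contra hge
        push_neg at hge
        have : τ ∈ S := ⟨⟨le_trans (le_csSup hSbdd hS0) hτ.1.le, hτ.2⟩, hge⟩
        exact absurd (le_csSup hSbdd this) (not_le.mpr hτ.1)
      have hs0 : 0 ≤ s := le_csSup hSbdd hS0
      have hderiv : ∀ τ ∈ interior (Icc s t1), deriv u τ < 0 := by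
        rw [interior_Icc]
        intro τ hτ
        have hτ01 : τ ∈ Ioo (0:ℝ) 1 := ⟨lt_of_le_of_lt hs0 hτ.1, lt_of_lt_of_le hτ.2 ht1.2⟩
        have hda : HasDerivAt u (g τ (u τ)) τ :=
          (hu τ (Ioo_subset_Icc_self hτ01)).hasDerivAt (Icc_mem_nhds hτ01.1 hτ01.2)
        rw [hda.deriv]
        have hub : B < u τ := hmid τ ⟨hτ.1, hτ.2.le⟩
        have hproju : proj (u τ) = B := by
          rw [hprojdef]
          simp only
          rw [projIcc_of_right_le hBB hub.le]
        rw [hgdef]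
        simp only [hproju]
        have := hBup τ
        have := hKv τ
        have := le_abs_self (v τ)
        linarith
      have hanti : StrictAntiOn u (Icc s t1) :=
        strictAntiOn_of_deriv_neg (convex_Icc s t1)
          (hucont.mono (Icc_subset_Icc hs0 ht1.2)) hderiv
      have := hanti (left_mem_Icc.mpr hst1.le) (right_mem_Icc.mpr hst1.le) hst1
      have hmid1 := hmid t1 ⟨hst1, le_refl _⟩
      linarith [hsS.2]
  refine ⟨u, hu0, hinv, fun t ht => ?_⟩
  have h1 := hu t ht
  have : g t (u t) = v t - f t (u t) := by
    rw [hgdef]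
    simp only
    rw [hprojdef]
    simp only
    rw [projIcc_of_mem hBB (hinv t ht)]
  rwa [this] at h1

end Exist

lemma hasDeriv_Ici {u : ℝ → ℝ} {d a b t : ℝ} (h : HasDerivWithinAt u d (Icc a b) t)
    (ht : t ∈ Ico a b) : HasDerivWithinAt u d (Ici t) t := by
  have h1 : HasDerivWithinAt u d (Ico t b) t :=
    h.mono (fun x hx => ⟨le_trans ht.1 hx.1, hx.2.le⟩)
  rw [← Ici_inter_Iio] at h1
  exact (hasDerivWithinAt_inter (Iio_mem_nhds ht.2)).mp h1

lemma hasDeriv_Iic {u : ℝ → ℝ} {d a b t : ℝ} (h : HasDerivWithinAt u d (Icc a b) t)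
    (ht : t ∈ Ioc a b) : HasDerivWithinAt u d (Iic t) t := by
  have h1 : HasDerivWithinAt u d (Ioc a t) t :=
    h.mono (fun x hx => ⟨hx.1.le, le_trans hx.2 ht.2⟩)
  rw [← Ioi_inter_Iic, inter_comm] at h1
  exact (hasDerivWithinAt_inter (Ioi_mem_nhds ht.1)).mp h1

section Compare
variable {f : ℝ → ℝ → ℝ} {v : ℝ → ℝ} {B : ℝ} {K : ℝ≥0}

/-- equality case -/
lemma compare_eq (hG : ∀ t, LipschitzOnWith K (fun x => v t - f t x) (Icc (-B) B))
    {u w : ℝ → ℝ} {a b : ℝ}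
    (hu : ∀ t ∈ Icc a b, HasDerivWithinAt u (v t - f t (u t)) (Icc a b) t)
    (hui : ∀ t ∈ Icc a b, u t ∈ Icc (-B) B)
    (hw : ∀ t ∈ Icc a b, HasDerivWithinAt w (v t - f t (w t)) (Icc a b) t)
    (hwi : ∀ t ∈ Icc a b, w t ∈ Icc (-B) B)
    (h0 : u a = w a) : EqOn u w (Icc a b) := by
  have hucont : ContinuousOn u (Icc a b) := fun t ht => (hu t ht).continuousWithinAt
  have hwcont : ContinuousOn w (Icc a b) := fun t ht => (hw t ht).continuousWithinAt
  exact ODE_solution_unique_of_mem_Icc_right (v := fun t x => v t - f t x)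
    (s := fun _ => Icc (-B) B) (fun t _ => hG t) hucont
    (fun t ht => hasDeriv_Ici (hu t (Ico_subset_Icc_self ht)) ht)
    (fun t ht => hui t (Ico_subset_Icc_self ht)) hwcont
    (fun t ht => hasDeriv_Ici (hw t (Ico_subset_Icc_self ht)) ht)
    (fun t ht => hwi t (Ico_subset_Icc_self ht)) h0

/-- backward equality case -/
lemma compare_eq' (hG : ∀ t, LipschitzOnWith K (fun x => v t - f t x) (Icc (-B) B))
    {u w : ℝ → ℝ} {a b : ℝ}
    (hu : ∀ t ∈ Icc a b, HasDerivWithinAt u (v t - f t (u t)) (Icc a b) t)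
    (hui : ∀ t ∈ Icc a b, u t ∈ Icc (-B) B)
    (hw : ∀ t ∈ Icc a b, HasDerivWithinAt w (v t - f t (w t)) (Icc a b) t)
    (hwi : ∀ t ∈ Icc a b, w t ∈ Icc (-B) B)
    (h0 : u b = w b) : EqOn u w (Icc a b) := by
  have hucont : ContinuousOn u (Icc a b) := fun t ht => (hu t ht).continuousWithinAt
  have hwcont : ContinuousOn w (Icc a b) := fun t ht => (hw t ht).continuousWithinAt
  exact ODE_solution_unique_of_mem_Icc_left (v := fun t x => v t - f t x)
    (s := fun _ => Icc (-B) B) (fun t _ => hG t) hucont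
    (fun t ht => hasDeriv_Iic (hu t (Ioc_subset_Icc_self ht)) ht)
    (fun t ht => hui t (Ioc_subset_Icc_self ht)) hwcont
    (fun t ht => hasDeriv_Iic (hw t (Ioc_subset_Icc_self ht)) ht)
    (fun t ht => hwi t (Ioc_subset_Icc_self ht)) h0

/-- comparison: solutions are ordered by initial data -/
lemma compare_le (hG : ∀ t, LipschitzOnWith K (fun x => v t - f t x) (Icc (-B) B))
    {u w : ℝ → ℝ}
    (hu : ∀ t ∈ Icc (0:ℝ) 1, HasDerivWithinAt u (v t - f t (u t)) (Icc (0:ℝ) 1) t)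
    (hui : ∀ t ∈ Icc (0:ℝ) 1, u t ∈ Icc (-B) B)
    (hw : ∀ t ∈ Icc (0:ℝ) 1, HasDerivWithinAt w (v t - f t (w t)) (Icc (0:ℝ) 1) t)
    (hwi : ∀ t ∈ Icc (0:ℝ) 1, w t ∈ Icc (-B) B)
    (h0 : u 0 ≤ w 0) : u 1 ≤ w 1 := by
  have hucont : ContinuousOn u (Icc (0:ℝ) 1) := fun t ht => (hu t ht).continuousWithinAt
  have hwcont : ContinuousOn w (Icc (0:ℝ) 1) := fun t ht => (hw t ht).continuousWithinAt
  rcases eq_or_lt_of_le h0 with heq | hlt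
  · exact le_of_eq (compare_eq hG hu hui hw hwi heq (right_mem_Icc.mpr zero_le_one))
  by_cases hT : ∀ t ∈ Icc (0:ℝ) 1, u t < w t
  · exact (hT 1 (right_mem_Icc.mpr zero_le_one)).le
  push_neg at hT
  exfalso
  set T := {t | t ∈ Icc (0:ℝ) 1 ∧ w t ≤ u t} with hTdef
  have hTne : T.Nonempty := by
    obtain ⟨t, ht, hle⟩ := hT
    exact ⟨t, ht, hle⟩
  have hTbdd : BddBelow T := ⟨0, fun x hx => hx.1.1⟩
  have hTclosed : IsClosed T := by
    have : T = Icc (0:ℝ) 1 ∩ {t | (w t, u t) ∈ {p : ℝ × ℝ | p.1 ≤ p.2}} := rfl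
    rw [this]
    exact ContinuousOn.preimage_isClosed_of_isClosed
      (hwcont.prodMk hucont) isClosed_Icc isClosed_le_prod
  set τ := sInf T with hτdef
  have hτT : τ ∈ T := hTclosed.csInf_mem hTne hTbdd
  have hτpos : 0 < τ := by
    rcases lt_or_eq_of_le hτT.1.1 with h | h
    · exact h
    · exfalso; rw [← h] at hτT; linarith [hτT.2]
  have hbefore : ∀ r ∈ Ico (0:ℝ) τ, u r < w r := by
    intro r hr
    by_contra hge
    push_neg at hge
    have : r ∈ T := ⟨⟨hr.1, le_trans hr.2.le hτT.1.2⟩, hge⟩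
    exact absurd (csInf_le hTbdd this) (not_le.mpr hr.2)
  -- u τ = w τ
  have hle2 : u τ ≤ w τ := by
    have hsub : Ico (0:ℝ) τ ⊆ Icc (0:ℝ) 1 := fun x hx => ⟨hx.1, le_trans hx.2.le hτT.1.2⟩
    have hne : (𝓝[Ico (0:ℝ) τ] τ).NeBot := by
      rw [← mem_closure_iff_nhdsWithin_neBot, closure_Ico hτpos.ne]
      exact right_mem_Icc.mpr hτpos.le
    have hcw : ContinuousWithinAt (fun t => u t - w t) (Ico (0:ℝ) τ) τ :=
      ((hucont.sub hwcont) τ hτT.1).mono hsub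
    have hev : ∀ᶠ r in 𝓝[Ico (0:ℝ) τ] τ, u r - w r ≤ 0 :=
      eventually_nhdsWithin_of_forall (fun r hr => sub_nonpos.mpr (hbefore r hr).le)
    have hfin : u τ - w τ ≤ 0 := le_of_tendsto hcw hev
    linarith
  have heqτ : u τ = w τ := le_antisymm hle2 hτT.2
  have hIccsub : Icc (0:ℝ) τ ⊆ Icc (0:ℝ) 1 := Icc_subset_Icc_right hτT.1.2
  have heq0 := compare_eq' hG
    (fun t ht => (hu t (hIccsub ht)).mono hIccsub)
    (fun t ht => hui t (hIccsub ht))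
    (fun t ht => (hw t (hIccsub ht)).mono hIccsub)
    (fun t ht => hwi t (hIccsub ht)) heqτ
  have := heq0 (left_mem_Icc.mpr hτpos.le)
  exact absurd this (ne_of_lt hlt)

end Compare

section Extend
variable {f : ℝ → ℝ → ℝ} {v : ℝ → ℝ}

lemma extend_periodic (hfper : ∀ t x, f (t+1) x = f t x) (hvper : Periodic1 v)
    {u : ℝ → ℝ} (hu : ∀ t ∈ Icc (0:ℝ) 1, HasDerivWithinAt u (v t - f t (u t)) (Icc (0:ℝ) 1) t)
    (h10 : u 1 = u 0) (t : ℝ) :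
    HasDerivAt (fun s => u (Int.fract s)) (v t - f t (u (Int.fract t))) t := by
  have hvp : ∀ s, v s = v (Int.fract s) := fun s => per_eval hvper s
  have hfp : ∀ s x, f s x = f (Int.fract s) x := fun s x =>
    per_eval (g := fun r => f r x) (fun r => hfper r x) s
  set n : ℤ := ⌊t⌋ with hn
  have hfl' : ∀ (s : ℝ) (m : ℤ), s ∈ Ico (m:ℝ) (m+1) → Int.fract s = s - m := by
    intro s m hs
    rw [← Int.self_sub_floor]
    congr 2
    rw [Int.floor_eq_iff]
    exact_mod_cast hs
  have hfl : ∀ s : ℝ, s ∈ Ico (n:ℝ) (n+1) → Int.fract s = s - n := fun s hs => hfl' s n hs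
  by_cases hzero : Int.fract t = 0
  · -- t is an integer: t = n
    have htn : t = (n : ℝ) := by
      have := Int.self_sub_floor t
      rw [hzero] at this
      linarith
    have hU0 : u (Int.fract t) = u 0 := by rw [hzero]
    -- right derivative
    have hright : HasDerivWithinAt (fun s => u (Int.fract s)) (v 0 - f 0 (u 0)) (Ici t) t := by
      have h0 : HasDerivWithinAt u (v 0 - f 0 (u 0)) (Ici 0) 0 :=
        hasDeriv_Ici (hu 0 (left_mem_Icc.mpr zero_le_one)) ⟨le_refl _, zero_lt_one⟩
      have hsub : HasDerivWithinAt (fun s : ℝ => s - (n:ℝ)) 1 (Ici t) t :=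
        ((hasDerivAt_id t).sub_const _).hasDerivWithinAt
      have hmaps : MapsTo (fun s : ℝ => s - (n:ℝ)) (Ici t) (Ici 0) := by
        intro s hs
        simp only [mem_Ici] at *
        rw [htn] at hs
        linarith
      have hcomp := HasDerivWithinAt.comp_of_eq t h0 hsub hmaps (by rw [htn]; ring)
      rw [mul_one] at hcomp
      refine hcomp.congr_of_eventuallyEq ?_ ?_
      · have hev : ∀ᶠ s in 𝓝[Ici t] t, s ∈ Ico (n:ℝ) (n+1) := by
          have h1 : ∀ᶠ s in 𝓝[Ici t] t, s ∈ Ici t := eventually_mem_nhdsWithin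
          have h2 : ∀ᶠ s in 𝓝[Ici t] t, s < (n:ℝ)+1 :=
            eventually_nhdsWithin_of_eventually_nhds
              (Filter.Tendsto.eventually_lt_const (by rw [htn]; linarith) tendsto_id)
          filter_upwards [h1, h2] with s hs1 hs2
          exact ⟨by rw [← htn]; exact hs1, hs2⟩
        filter_upwards [hev] with s hs
        simp only [Function.comp]
        rw [hfl s hs]
      · simp only [Function.comp]
        rw [hU0, htn]
        norm_num
    -- left derivative
    have hleft : HasDerivWithinAt (fun s => u (Int.fract s)) (v 0 - f 0 (u 0)) (Iic t) t := by
      have h1 : HasDerivWithinAt u (v 1 - f 1 (u 1)) (Iic 1) 1 :=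
        hasDeriv_Iic (hu 1 (right_mem_Icc.mpr zero_le_one)) ⟨zero_lt_one, le_refl _⟩
      have hval : v 1 - f 1 (u 1) = v 0 - f 0 (u 0) := by
        have hv1 : v 1 = v 0 := by have := hvper 0; rwa [zero_add] at this
        have hf1 : f 1 (u 1) = f 0 (u 0) := by
          rw [h10]
          have := hfper 0 (u 0); rwa [zero_add] at this
        rw [hv1, hf1]
      rw [hval] at h1
      have hsub : HasDerivWithinAt (fun s : ℝ => s - (n:ℝ) + 1) 1 (Iic t) t := by
        have := ((hasDerivAt_id t).sub_const (n:ℝ)).add_const (1:ℝ)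
        exact this.hasDerivWithinAt
      have hmaps : MapsTo (fun s : ℝ => s - (n:ℝ) + 1) (Iic t) (Iic 1) := by
        intro s hs
        simp only [mem_Iic] at *
        rw [htn] at hs
        linarith
      have hcomp := HasDerivWithinAt.comp_of_eq t h1 hsub hmaps (by rw [htn]; ring)
      rw [mul_one] at hcomp
      have hptwise : ∀ s : ℝ, s ∈ Ioc ((n:ℝ)-1) (n:ℝ) → u (Int.fract s) = u (s - (n:ℝ) + 1) := by
        intro s hs
        rcases eq_or_lt_of_le hs.2 with h | h
        · rw [h]
          rw [show Int.fract ((n:ℝ)) = 0 from by exact_mod_cast Int.fract_intCast n]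
          rw [show (n:ℝ) - (n:ℝ) + 1 = 1 from by ring, h10]
        · have hfr := hfl' s (n-1) ⟨by push_cast; linarith [hs.1], by push_cast; linarith⟩
          rw [hfr]
          congr 1
          push_cast
          ring
      refine hcomp.congr_of_eventuallyEq ?_ ?_
      · have h1' : ∀ᶠ s in 𝓝[Iic t] t, s ∈ Iic t := eventually_mem_nhdsWithin
        have h2 : ∀ᶠ s in 𝓝[Iic t] t, (n:ℝ)-1 < s :=
          eventually_nhdsWithin_of_eventually_nhds
            (Filter.Tendsto.eventually_const_lt (by rw [htn]; linarith) tendsto_id)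
        filter_upwards [h1', h2] with s hs1 hs2
        have hmem' : s ∈ Ioc ((n:ℝ)-1) (n:ℝ) := ⟨hs2, by rw [← htn]; exact mem_Iic.mp hs1⟩
        simpa only [Function.comp] using hptwise s hmem'
      · simp only [Function.comp]
        rw [hU0, htn]
        rw [show (n:ℝ) - (n:ℝ) + 1 = 1 from by ring, h10]
    have := hleft.union hright
    rw [Iic_union_Ici, hasDerivWithinAt_univ] at this
    have hval : v 0 - f 0 (u 0) = v t - f t (u (Int.fract t)) := by
      rw [hvp t, hfp t, hzero]
    rwa [hval] at this
  · -- t is not an integer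
    have hmem : t ∈ Ioo (n:ℝ) (n+1) := by
      have h1 : (n:ℝ) ≤ t := Int.floor_le t
      have h2 : t < (n:ℝ)+1 := by exact_mod_cast Int.lt_floor_add_one t
      rcases eq_or_lt_of_le h1 with h | h
      · exfalso
        apply hzero
        rw [← h]
        exact_mod_cast Int.fract_intCast n
      · exact ⟨h, h2⟩
    set θ := t - (n:ℝ) with hθ
    have hθmem : θ ∈ Ioo (0:ℝ) 1 := by
      constructor <;> [skip; skip] <;> simp only [hθ] <;> cases hmem <;> linarith
    have hda : HasDerivAt u (v θ - f θ (u θ)) θ :=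
      (hu θ (Ioo_subset_Icc_self hθmem)).hasDerivAt (Icc_mem_nhds hθmem.1 hθmem.2)
    have hsub : HasDerivAt (fun s : ℝ => s - (n:ℝ)) 1 t := (hasDerivAt_id t).sub_const _
    have hcomp := HasDerivAt.comp_of_eq t hda hsub rfl
    rw [mul_one] at hcomp
    have hev : (fun s => u (Int.fract s)) =ᶠ[𝓝 t] (fun s : ℝ => u (s - (n:ℝ))) := by
      have hnb : Ioo ((n:ℝ)) ((n:ℝ)+1) ∈ 𝓝 t := Ioo_mem_nhds hmem.1 hmem.2
      filter_upwards [hnb] with s hs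
      rw [hfl s (Ioo_subset_Ico_self hs)]
    have hfin := hcomp.congr_of_eventuallyEq hev
    have hval : v θ - f θ (u θ) = v t - f t (u (Int.fract t)) := by
      have hfr : Int.fract t = θ := hfl t (Ioo_subset_Ico_self hmem)
      rw [hvp t, hfp t, hfr]
    rwa [hval] at hfin

end Extend

section Uniq
variable {f : ℝ → ℝ → ℝ} {v : ℝ → ℝ}

lemma field_lip {B : ℝ} {L : ℝ≥0} (hL : ∀ t, LipschitzOnWith L (f t) (Icc (-B) B)) :
    ∀ t, LipschitzOnWith L (fun x => v t - f t x) (Icc (-B) B) := by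
  intro t
  have h2 : LipschitzWith 1 (fun y : ℝ => v t - y) :=
    LipschitzWith.of_dist_le_mul (fun a b => by
      rw [Real.dist_eq, Real.dist_eq, NNReal.coe_one, one_mul,
        show v t - a - (v t - b) = -(a - b) by ring, abs_neg])
  have := h2.comp_lipschitzOnWith (hL t)
  exact (by simpa using this : LipschitzOnWith L ((fun y => v t - y) ∘ f t) (Icc (-B) B))

lemma sol_hasDeriv {u : ℝ → ℝ} (hu : IsPeriodicSol f v u) (t : ℝ) :
    HasDerivAt u (v t - f t (u t)) t := by
  have hd : HasDerivAt u (deriv u t) t :=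
    ((hu.1.differentiable one_ne_zero) t).hasDerivAt
  have : deriv u t = v t - f t (u t) := by have := hu.2.2 t; linarith
  rwa [this] at hd

lemma no_cross (hmono : ∀ t, StrictMono (f t)) {u w : ℝ → ℝ}
    (hu : IsPeriodicSol f v u) (hw : IsPeriodicSol f v w)
    (hne : ∀ t, u t ≠ w t) (h0 : u 0 < w 0) : False := by
  have hucont : Continuous u := hu.1.continuous
  have hwcont : Continuous w := hw.1.continuous
  -- u < w everywhere
  have hlt : ∀ t, u t < w t := by
    intro t
    rcases lt_or_ge (u t) (w t) with h | h
    · exact h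
    · exfalso
      have hne' : u t ≠ w t := hne t
      have hcont : ContinuousOn (fun s => u s - w s) (uIcc 0 t) :=
        (hucont.sub hwcont).continuousOn
      have h0' : (0:ℝ) ∈ uIcc (u 0 - w 0) (u t - w t) := by
        rw [mem_uIcc]
        left
        constructor
        · linarith
        · rcases lt_or_eq_of_le h with h' | h'
          · linarith
          · exact absurd h'.symm hne'
      obtain ⟨t2, -, ht2⟩ := intermediate_value_uIcc hcont h0'
      have : u t2 = w t2 := by have : u t2 - w t2 = 0 := ht2; linarith
      exact hne t2 this
  -- φ := w - u is positive, periodic, with negative derivative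
  have hdφ : ∀ t, HasDerivAt (fun s => w s - u s) (f t (u t) - f t (w t)) t := by
    intro t
    have := (sol_hasDeriv hw t).sub (sol_hasDeriv hu t)
    have heq : v t - f t (w t) - (v t - f t (u t)) = f t (u t) - f t (w t) := by ring
    rwa [heq] at this
  have hneg : ∀ t ∈ interior (Icc (0:ℝ) 1), deriv (fun s => w s - u s) t < 0 := by
    intro t _
    rw [(hdφ t).deriv]
    have := (hmono t) (hlt t)
    linarith
  have hanti : StrictAntiOn (fun s => w s - u s) (Icc (0:ℝ) 1) :=
    strictAntiOn_of_deriv_neg (convex_Icc _ _) ((hwcont.sub hucont).continuousOn) hneg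
  have h01 := hanti (left_mem_Icc.mpr zero_le_one) (right_mem_Icc.mpr zero_le_one) zero_lt_one
  have hper : w 1 - u 1 = w 0 - u 0 := by
    have h1 := hu.2.1 0
    have h2 := hw.2.1 0
    rw [zero_add] at h1 h2
    rw [h1, h2]
  simp only at h01
  linarith

lemma periodic_sol_unique (hf : Nonlinearity f) (hmono : ∀ t, StrictMono (f t))
    {u1 u2 : ℝ → ℝ} (h1 : IsPeriodicSol f v u1) (h2 : IsPeriodicSol f v u2) :
    u1 = u2 := by
  by_cases hex : ∃ t0, u1 t0 = u2 t0
  · obtain ⟨t0, ht0⟩ := hex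
    obtain ⟨C1, hC10, hC1⟩ := per_bound h1.2.1 h1.1.continuous
    obtain ⟨C2, hC20, hC2⟩ := per_bound h2.2.1 h2.1.continuous
    set C := max C1 C2 with hC
    have hC0 : 0 ≤ C := le_trans hC10 (le_max_left _ _)
    have hmem1 : ∀ t, u1 t ∈ Icc (-C) C := by
      intro t
      have habs := hC1 t
      rw [abs_le] at habs
      have hle := le_max_left C1 C2
      constructor <;> [linarith [habs.1]; linarith [habs.2]]
    have hmem2 : ∀ t, u2 t ∈ Icc (-C) C := by
      intro t
      have habs := hC2 t
      rw [abs_le] at habs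
      have hle := le_max_right C1 C2
      constructor <;> [linarith [habs.1]; linarith [habs.2]]
    obtain ⟨L, hL⟩ := lip_band hf hC0
    have hG := field_lip (v := v) hL
    funext t
    set r : ℝ := |t - t0| + 1 with hr
    have hrpos : 0 < r := by positivity
    have htmem : t ∈ Icc (t0 - r) (t0 + r) := by
      constructor
      · have := abs_sub_abs_le_abs_sub (t - t0) 0
        have h := neg_abs_le (t - t0)
        simp only [hr]; linarith
      · have h := le_abs_self (t - t0)
        simp only [hr]; linarith
    have ht0mem : t0 ∈ Ioo (t0 - r) (t0 + r) := by
      constructor <;> simp only [hr] <;> linarith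
    exact ODE_solution_unique_of_mem_Icc (v := fun s x => v s - f s x)
      (s := fun _ => Icc (-C) C) (fun t _ => hG t) ht0mem
      (h1.1.continuous.continuousOn)
      (fun s _ => sol_hasDeriv h1 s) (fun s _ => hmem1 s)
      (h2.1.continuous.continuousOn)
      (fun s _ => sol_hasDeriv h2 s) (fun s _ => hmem2 s) ht0 htmem
  · push_neg at hex
    exfalso
    rcases lt_trichotomy (u1 0) (u2 0) with h | h | h
    · exact no_cross hmono h1 h2 hex h
    · exact hex 0 h
    · exact no_cross hmono h2 h1 (fun t => (hex t).symm) h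

end Uniq

/-- **Proposition 4.1(c)** (solution level). If `f` is a proper nonlinearity
which is strictly increasing in the second variable (its derivative `D₂f` may
vanish), then for every continuous 1-periodic `v` the equation
`u' + f(t,u) = v` has exactly one periodic solution. -/
theorem stmt12 (f : ℝ → ℝ → ℝ) (hf : Nonlinearity f) (hproper : ProperNL f)
    (hmono : ∀ t, StrictMono (f t))
    (v : ℝ → ℝ) (hv : Continuous v) (hvper : Periodic1 v) :
    ∃! u : ℝ → ℝ, IsPeriodicSol f v u := by
  classical
  have hfc : Continuous (Function.uncurry f) := hf.1.continuous
  -- bound for v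
  obtain ⟨Kv, hKv0, hKv⟩ := per_bound hvper hv
  -- barrier
  obtain ⟨B, hBpos, hBup, hBdown⟩ := barrier hf hproper hmono hKv0
  -- Lipschitz and sup bound on the band
  obtain ⟨L, hL⟩ := lip_band hf hBpos.le
  obtain ⟨Cf, hCf0, hCf⟩ := bound_band hf hBpos.le
  have hG := field_lip (v := v) hL
  -- solutions on [0,1] for every initial value in the band
  have hsolex : ∀ p : ℝ, ∃ u : ℝ → ℝ, p ∈ Set.Icc (-B) B →
      (u 0 = p ∧ (∀ t ∈ Set.Icc (0:ℝ) 1, u t ∈ Set.Icc (-B) B) ∧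
        ∀ t ∈ Set.Icc (0:ℝ) 1, HasDerivWithinAt u (v t - f t (u t)) (Set.Icc (0:ℝ) 1) t) := by
    intro p
    by_cases hp : p ∈ Set.Icc (-B) B
    · obtain ⟨u, h1, h2, h3⟩ := exists_sol hfc hv hKv hBpos hBup hBdown hL hCf hp
      exact ⟨u, fun _ => ⟨h1, h2, h3⟩⟩
    · exact ⟨fun _ => p, fun hp' => absurd hp' hp⟩
  choose sol hsol using hsolex
  set P : ℝ → ℝ := fun p => sol p 1 with hP
  have hPmem : ∀ p ∈ Set.Icc (-B) B, P p ∈ Set.Icc (-B) B := fun p hp =>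
    (hsol p hp).2.1 1 (Set.right_mem_Icc.mpr zero_le_one)
  have hPmono : ∀ p ∈ Set.Icc (-B) B, ∀ q ∈ Set.Icc (-B) B, p ≤ q → P p ≤ P q := by
    intro p hp q hq hpq
    exact compare_le hG (hsol p hp).2.2 (hsol p hp).2.1 (hsol q hq).2.2 (hsol q hq).2.1
      (by rw [(hsol p hp).1, (hsol q hq).1]; exact hpq)
  -- fixed point of the Poincaré map
  set S : Set ℝ := {x | x ∈ Set.Icc (-B) B ∧ x ≤ P x} with hS
  have hmBI : -B ∈ Set.Icc (-B) B := Set.left_mem_Icc.mpr (by linarith)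
  have hmB : -B ∈ S := ⟨hmBI, (hPmem (-B) hmBI).1⟩
  have hSne : S.Nonempty := ⟨-B, hmB⟩
  have hSbdd : BddAbove S := ⟨B, fun x hx => hx.1.2⟩
  set a : ℝ := sSup S with ha
  have haI : a ∈ Set.Icc (-B) B :=
    ⟨le_csSup hSbdd hmB, csSup_le hSne (fun x hx => hx.1.2)⟩
  have haP : a ≤ P a := csSup_le hSne (fun x hx =>
    le_trans hx.2 (hPmono x hx.1 a haI (le_csSup hSbdd hx)))
  have hPa : P a ≤ a := le_csSup hSbdd ⟨hPmem a haI, hPmono a haI (P a) (hPmem a haI) haP⟩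
  have hfix : sol a 1 = sol a 0 := by
    rw [(hsol a haI).1]
    exact le_antisymm hPa haP
  -- the periodic extension
  set U : ℝ → ℝ := fun t => sol a (Int.fract t) with hU
  have hU' : ∀ t, HasDerivAt U (v t - f t (U t)) t :=
    extend_periodic hf.2 hvper (hsol a haI).2.2 hfix
  have hUdiff : Differentiable ℝ U := fun t => (hU' t).differentiableAt
  have hUder : ∀ t, deriv U t = v t - f t (U t) := fun t => (hU' t).deriv
  have hUcont : Continuous U := hUdiff.continuous
  have hUsol : IsPeriodicSol f v U := by
    refine ⟨?_, ?_, ?_⟩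
    · rw [contDiff_one_iff_deriv]
      refine ⟨hUdiff, ?_⟩
      have : deriv U = fun t => v t - f t (U t) := funext hUder
      rw [this]
      exact hv.sub (hfc.comp (continuous_id.prodMk hUcont))
    · intro t
      simp only [hU]
      congr 1
      rw [show (1:ℝ) = ((1:ℤ):ℝ) by norm_num, Int.fract_add_intCast]
    · intro t
      rw [hUder t]
      ring
  exact ⟨U, hUsol, fun u hu => periodic_sol_unique hf hmono hu hUsol⟩
end

section
/- Let f : ℝ → ℝ be a smooth function with f'''(x) ≥ 0 for all x and with the zero set of f''' consisting of isolated points. Suppose u₁, u₂ : ℝ → ℝ are continuously differentiable 1-periodic functions with u₁(t) < u₂(t) for all t, satisfying ∫₀¹ f'(u₁(t)) dt = ∫₀¹ f'(u₂(t)) dt = 0, and suppose there is a constant C ∈ ℝ with u₁'(t) + f(u₁(t)) = u₂'(t) + f(u₂(t)) + C for all t. Then C > 0. -/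
open Filter Topology Set intervalIntegral MeasureTheory

open Filter Topology Set intervalIntegral MeasureTheory

/-- Strict trapezoid inequality for `f` with strictly convex derivative. -/
lemma trapezoid_aux {f : ℝ → ℝ} (hf : Differentiable ℝ f) (hg : Continuous (deriv f))
    (hconv : StrictConvexOn ℝ Set.univ (deriv f)) {a b : ℝ} (hab : a < b) :
    f b - f a < (b - a) * (deriv f a + deriv f b) / 2 := by
  set g := deriv f with hgdef
  have hba : b - a ≠ 0 := sub_ne_zero.mpr hab.ne'
  set m : ℝ := (g b - g a) / (b - a) with hm
  set chord : ℝ → ℝ := fun z => g a + (z - a) * m with hchord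
  have hcc : Continuous chord := by fun_prop
  have h1 : ∀ z ∈ Ioo a b, g z < chord z := by
    intro z hz
    obtain ⟨hza, hzb⟩ := hz
    set t : ℝ := (b - z) / (b - a) with ht
    have ht0 : 0 < t := div_pos (by linarith) (by linarith)
    have ht1 : 0 < 1 - t := by
      rw [ht]; rw [sub_pos, div_lt_one (by linarith)]; linarith
    have key := hconv.2 (Set.mem_univ a) (Set.mem_univ b) hab.ne ht0 ht1 (by ring)
    have hz' : t • a + (1 - t) • b = z := by
      simp only [smul_eq_mul, ht]; field_simp; ring
    rw [hz'] at key
    calc g z < t * g a + (1 - t) * g b := key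
      _ = chord z := by simp only [hchord, hm, ht]; field_simp; ring
  have hgi : IntervalIntegrable g volume a b := (hg.intervalIntegrable _ _)
  have hci : IntervalIntegrable chord volume a b := (hcc.intervalIntegrable _ _)
  have h2 : 0 < ∫ z in a..b, (chord z - g z) := by
    apply intervalIntegral_pos_of_pos_on (hci.sub hgi) _ hab
    intro x hx; exact sub_pos.mpr (h1 x hx)
  have h3 : (∫ z in a..b, g z) = f b - f a :=
    integral_deriv_eq_sub (fun x _ => hf.differentiableAt) hgi
  have h4 : (∫ z in a..b, chord z) = (b - a) * (g a + g b) / 2 := by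
    have : (∫ z in a..b, chord z) = (∫ z in a..b, (g a - a * m) + m * z) := by
      apply intervalIntegral.integral_congr; intro z _; simp [hchord]; ring
    have e1 := intervalIntegral.integral_add (a := a) (b := b) (μ := volume)
      (f := fun _ : ℝ => g a - a * m) (g := fun z : ℝ => m * z)
      intervalIntegrable_const ((continuous_const.mul continuous_id).intervalIntegrable _ _)
    rw [this, e1, intervalIntegral.integral_const, intervalIntegral.integral_const_mul,
      integral_id]
    simp only [hm, smul_eq_mul]
    field_simp
    ring
  rw [intervalIntegral.integral_sub hci hgi, h3, h4] at h2
  linarith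

/-- nonneg derivative with isolated zeros gives strict monotonicity. -/
lemma strictMono_aux {h : ℝ → ℝ} (hd : Differentiable ℝ h)
    (hnn : ∀ x, 0 ≤ deriv h x)
    (hiso : ∀ x, deriv h x = 0 → ∀ᶠ y in 𝓝[≠] x, deriv h y ≠ 0) :
    StrictMono h := by
  have hmono : Monotone h := monotone_of_deriv_nonneg hd hnn
  intro a b hab
  rcases lt_or_eq_of_le (hmono hab.le) with h' | heq
  · exact h'
  · exfalso
    have hconst : ∀ y ∈ Ioo a b, h y = h a := by
      intro y hy
      exact le_antisymm (heq ▸ hmono hy.2.le) (hmono hy.1.le)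
    have hder0 : ∀ y ∈ Ioo a b, deriv h y = 0 := by
      intro y hy
      have hev : h =ᶠ[𝓝 y] fun _ => h a := by
        filter_upwards [Ioo_mem_nhds hy.1 hy.2] with z hz using hconst z hz
      rw [hev.deriv_eq, deriv_const]
    set x : ℝ := (a + b) / 2 with hx
    have hxm : x ∈ Ioo a b := ⟨by simp [hx]; linarith, by simp [hx]; linarith⟩
    have h0 := hiso x (hder0 x hxm)
    have h0' : ∀ᶠ y in 𝓝[≠] x, deriv h y = 0 := by
      have : Ioo a b ∈ 𝓝[≠] x := nhdsWithin_le_nhds (Ioo_mem_nhds hxm.1 hxm.2)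
      filter_upwards [this] with y hy using hder0 y hy
    obtain ⟨y, hy1, hy2⟩ := (h0.and h0').exists
    exact hy1 hy2

/-- **Key comparison claim in the proof of Theorem 5.1**. Let `f` be smooth
with `f''' ≥ 0` and the zeros of `f'''` isolated. If `u₁ < u₂` are `C¹`
1-periodic functions with `∫₀¹ f'(u₁) = ∫₀¹ f'(u₂) = 0` (two critical points
of `F` on a common fibre) and `u₁' + f(u₁) = u₂' + f(u₂) + C` for a constant
`C`, then `C > 0`. -/
theorem stmt18 (f : ℝ → ℝ) (hf : ContDiff ℝ (⊤ : ℕ∞) f)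
    (h3nonneg : ∀ x, 0 ≤ iteratedDeriv 3 f x)
    (h3iso : ∀ x, iteratedDeriv 3 f x = 0 →
      ∀ᶠ y in 𝓝[≠] x, iteratedDeriv 3 f y ≠ 0)
    (u₁ u₂ : ℝ → ℝ)
    (hu₁ : ContDiff ℝ 1 u₁) (hu₁per : Periodic1 u₁)
    (hu₂ : ContDiff ℝ 1 u₂) (hu₂per : Periodic1 u₂)
    (hlt : ∀ t, u₁ t < u₂ t)
    (hcrit₁ : (∫ t in (0:ℝ)..1, deriv f (u₁ t)) = 0)
    (hcrit₂ : (∫ t in (0:ℝ)..1, deriv f (u₂ t)) = 0)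
    (C : ℝ)
    (hC : ∀ t, deriv u₁ t + f (u₁ t) = deriv u₂ t + f (u₂ t) + C) :
    0 < C := by
  have hu₁per' : ∀ t, u₁ (t + 1) = u₁ t := hu₁per
  have hu₂per' : ∀ t, u₂ (t + 1) = u₂ t := hu₂per
  have hfd : Differentiable ℝ f := hf.differentiable (by simp)
  have hgC : ContDiff ℝ (⊤ : ℕ∞) (deriv f) := (contDiff_infty_iff_deriv.mp hf).2
  have hgc : Continuous (deriv f) := hgC.continuous
  have hf2C : ContDiff ℝ (⊤ : ℕ∞) (deriv (deriv f)) := (contDiff_infty_iff_deriv.mp hgC).2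
  have h23 : iteratedDeriv 3 f = deriv (deriv (deriv f)) := by
    rw [show (3:ℕ) = 2 + 1 from rfl, iteratedDeriv_succ,
      show (2:ℕ) = 1 + 1 from rfl, iteratedDeriv_succ, iteratedDeriv_one]
  have hsm : StrictMono (deriv (deriv f)) := by
    apply strictMono_aux (hf2C.differentiable (by simp))
    · intro x; rw [← h23]; exact h3nonneg x
    · intro x hx
      have hx' : iteratedDeriv 3 f x = 0 := by rw [h23]; exact hx
      have := h3iso x hx'
      simpa only [h23] using this
  have hconv : StrictConvexOn ℝ Set.univ (deriv f) :=
    hsm.strictConvexOn_univ_of_deriv hgc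
  have hu₁d : Differentiable ℝ u₁ := hu₁.differentiable one_ne_zero
  have hu₂d : Differentiable ℝ u₂ := hu₂.differentiable one_ne_zero
  have hu₁'c : Continuous (deriv u₁) := hu₁.continuous_deriv le_rfl
  have hu₂'c : Continuous (deriv u₂) := hu₂.continuous_deriv le_rfl
  set w : ℝ → ℝ := fun t => u₂ t - u₁ t with hwdef
  have hwpos : ∀ t, 0 < w t := fun t => sub_pos.mpr (hlt t)
  have hwd : Differentiable ℝ w := hu₂d.sub hu₁d
  have hw' : ∀ t, deriv w t = deriv u₂ t - deriv u₁ t := fun t =>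
    deriv_sub (hu₂d t) (hu₁d t)
  have hw'c : Continuous (deriv w) := by
    have : deriv w = fun t => deriv u₂ t - deriv u₁ t := funext hw'
    rw [this]; exact hu₂'c.sub hu₁'c
  have hwc : Continuous w := hwd.continuous
  have hwper : w 1 = w 0 := by
    have h1 := hu₁per' 0; have h2 := hu₂per' 0
    simp only [zero_add] at h1 h2
    simp [hwdef, h1, h2]
  -- pointwise strict inequality
  have key : ∀ t, 0 < (deriv f (u₁ t) + deriv f (u₂ t)) / 2 + (deriv w t + C) / w t := by
    intro t
    have htrap := trapezoid_aux hfd hgc hconv (hlt t)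
    have hw0 := hwpos t
    have hrel : f (u₂ t) - f (u₁ t) = -(deriv w t) - C := by
      have h := hC t; rw [hw' t]; linarith
    rw [hrel] at htrap
    have h2 : (-((deriv f (u₁ t) + deriv f (u₂ t)) / 2)) * w t < deriv w t + C := by
      nlinarith [htrap]
    have h3 : -((deriv f (u₁ t) + deriv f (u₂ t)) / 2) < (deriv w t + C) / w t :=
      (lt_div_iff₀ hw0).mpr h2
    linarith
  -- continuity and integrability of the pieces
  have hne : ∀ t, w t ≠ 0 := fun t => (hwpos t).ne'
  have hc1 : Continuous fun t => deriv f (u₁ t) := hgc.comp hu₁d.continuous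
  have hc2 : Continuous fun t => deriv f (u₂ t) := hgc.comp hu₂d.continuous
  have hcA : Continuous fun t => (deriv f (u₁ t) + deriv f (u₂ t)) / 2 :=
    (hc1.add hc2).div_const 2
  have hcB : Continuous fun t => (deriv w t + C) / w t :=
    (hw'c.add continuous_const).div hwc hne
  -- positivity of the total integral
  have hpos : 0 < ∫ t in (0:ℝ)..1,
      ((deriv f (u₁ t) + deriv f (u₂ t)) / 2 + (deriv w t + C) / w t) :=
    intervalIntegral_pos_of_pos (((hcA.add hcB)).intervalIntegrable _ _)
      key one_pos
  -- compute the integral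
  have split1 := intervalIntegral.integral_add (a := (0:ℝ)) (b := 1) (μ := volume)
    (f := fun t => (deriv f (u₁ t) + deriv f (u₂ t)) / 2)
    (g := fun t => (deriv w t + C) / w t)
    (hcA.intervalIntegrable _ _) (hcB.intervalIntegrable _ _)
  have IA : (∫ t in (0:ℝ)..1, (deriv f (u₁ t) + deriv f (u₂ t)) / 2) = 0 := by
    have e := intervalIntegral.integral_add (a := (0:ℝ)) (b := 1) (μ := volume)
      (f := fun t => deriv f (u₁ t)) (g := fun t => deriv f (u₂ t))
      (hc1.intervalIntegrable _ _) (hc2.intervalIntegrable _ _)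
    have : (∫ t in (0:ℝ)..1, (deriv f (u₁ t) + deriv f (u₂ t)) / 2)
        = (∫ t in (0:ℝ)..1, (deriv f (u₁ t) + deriv f (u₂ t))) / 2 :=
      intervalIntegral.integral_div 2 _
    rw [this, e, hcrit₁, hcrit₂]; norm_num
  have Ilog : (∫ t in (0:ℝ)..1, deriv w t / w t) = 0 := by
    have hL : ∀ t ∈ uIcc (0:ℝ) 1, HasDerivAt (fun s => Real.log (w s)) (deriv w t / w t) t := by
      intro t _
      have h1 : HasDerivAt w (deriv w t) t := (hwd t).hasDerivAt
      have := (Real.hasDerivAt_log (hne t)).comp t h1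
      simpa [div_eq_inv_mul, Function.comp_def] using this
    rw [intervalIntegral.integral_eq_sub_of_hasDerivAt hL
      (((hw'c.div hwc hne)).intervalIntegrable _ _)]
    rw [hwper]; ring
  have IB : (∫ t in (0:ℝ)..1, (deriv w t + C) / w t)
      = C * ∫ t in (0:ℝ)..1, (w t)⁻¹ := by
    have hcong : ∀ t, (deriv w t + C) / w t = deriv w t / w t + C * (w t)⁻¹ := by
      intro t; rw [add_div]; ring
    have e0 : (∫ t in (0:ℝ)..1, (deriv w t + C) / w t)
        = ∫ t in (0:ℝ)..1, (deriv w t / w t + C * (w t)⁻¹) := by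
      apply intervalIntegral.integral_congr; intro t _; exact hcong t
    have e1 := intervalIntegral.integral_add (a := (0:ℝ)) (b := 1) (μ := volume)
      (f := fun t => deriv w t / w t) (g := fun t => C * (w t)⁻¹)
      ((hw'c.div hwc hne).intervalIntegrable _ _)
      ((continuous_const.mul (hwc.inv₀ hne)).intervalIntegrable _ _)
    rw [e0, e1, Ilog, intervalIntegral.integral_const_mul, zero_add]
  have Iinv : 0 ≤ ∫ t in (0:ℝ)..1, (w t)⁻¹ :=
    intervalIntegral.integral_nonneg (by norm_num)
      (fun t _ => inv_nonneg.mpr (hwpos t).le)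
  rw [split1, IA, IB, zero_add] at hpos
  nlinarith [hpos, Iinv]
end
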